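/- arXiv:2206.06071 — 5 statements merged into one kernel-verified Lean document; each statement's English description precedes it below -/
import Mathlib

section
/- Let (λₙ) be a sequence in L⁰(F, ℝᵈ) (equivalence classes of ℝᵈ-valued random variables) that is a.s. bounded, i.e. sup_n |λₙ| < ∞ almost surely. Then there exists a sequence (μₙ) with each μₙ a finite convex combination of λₙ, λₙ₊₁, … (with real nonnegative coefficients summing to 1), such that (μₙ) converges almost surely to some μ ∈ L⁰(F, ℝᵈ). -/
open MeasureTheory Filter Topology
open scoped ENNReal NNReal

namespace RandomNormed

lemma exists_forward_combo {E : Type*} [AddCommGroup E] [Module ℝ E]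
    (f : ℕ → E) (n : ℕ) (x : E) (hx : x ∈ convexHull ℝ (f '' Set.Ici n)) :
    ∃ (L : ℕ) (c : ℕ → ℝ), (∀ j, 0 ≤ c j) ∧ (∑ j ∈ Finset.range (L+1), c j = 1) ∧
      (∑ j ∈ Finset.range (L+1), c j • f (n+j)) = x := by
  rw [convexHull_eq] at hx
  obtain ⟨ι, s, w, z, hw0, hw1, hz, hxx⟩ := hx
  have hk : ∀ i ∈ s, ∃ m, n ≤ m ∧ z i = f m := by
    intro i hi
    obtain ⟨m, hm, hfm⟩ := hz i hi
    exact ⟨m, hm, hfm.symm⟩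
  classical
  set k : ι → ℕ := fun i => if h : ∃ m, n ≤ m ∧ z i = f m then h.choose else n with hkdef
  have hk1 : ∀ i ∈ s, n ≤ k i ∧ z i = f (k i) := by
    intro i hi
    have h := hk i hi
    simp only [hkdef, dif_pos h]
    exact h.choose_spec
  set L : ℕ := s.sup (fun i => k i - n) with hL
  set c : ℕ → ℝ := fun j => ∑ i ∈ s.filter (fun i => k i - n = j), w i with hc
  have hmaps : ∀ i ∈ s, k i - n ∈ Finset.range (L+1) := by
    intro i hi
    simp only [Finset.mem_range, Nat.lt_succ_iff]
    exact Finset.le_sup (f := fun i => k i - n) hi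
  refine ⟨L, c, ?_, ?_, ?_⟩
  · intro j
    exact Finset.sum_nonneg fun i hi => hw0 i (Finset.mem_filter.mp hi).1
  · rw [show (∑ j ∈ Finset.range (L+1), c j) = ∑ i ∈ s, w i from
      Finset.sum_fiberwise_of_maps_to hmaps w]
    exact hw1
  · have : ∀ j ∈ Finset.range (L+1), c j • f (n+j)
        = ∑ i ∈ s.filter (fun i => k i - n = j), w i • z i := by
      intro j hj
      rw [hc, Finset.sum_smul]
      refine Finset.sum_congr rfl fun i hi => ?_
      obtain ⟨his, hkij⟩ := Finset.mem_filter.mp hi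
      obtain ⟨hni, hzi⟩ := hk1 i his
      rw [hzi, ← hkij, Nat.add_sub_cancel' hni]
    rw [Finset.sum_congr rfl this, Finset.sum_fiberwise_of_maps_to hmaps (fun i => w i • z i),
      ← Finset.centerMass_eq_of_sum_1 _ _ hw1, hxx]

lemma exists_mem_closure_convexHull_tails {H : Type*} [NormedAddCommGroup H]
    [InnerProductSpace ℝ H] [CompleteSpace H] (f : ℕ → H) (C : ℝ) (hC : ∀ n, ‖f n‖ ≤ C) :
    ∃ v : H, ∀ n, v ∈ closure (convexHull ℝ (f '' Set.Ici n)) := by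
  classical
  set K : ℕ → Set H := fun n => closure (convexHull ℝ (f '' Set.Ici n)) with hK
  have hKconv : ∀ n, Convex ℝ (K n) := fun n => (convex_convexHull ℝ _).closure
  have hKne : ∀ n, (K n).Nonempty := fun n =>
    ⟨f n, subset_closure (subset_convexHull ℝ _ ⟨n, le_refl n, rfl⟩)⟩
  have hKmono : ∀ {n m : ℕ}, n ≤ m → K m ⊆ K n := by
    intro n m hnm
    exact closure_mono (convexHull_mono (Set.image_mono (Set.Ici_subset_Ici.mpr hnm)))
  have hmin : ∀ n : ℕ, ∃ v ∈ K n, ‖(0:H) - v‖ = ⨅ w : K n, ‖(0:H) - w‖ := fun n =>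
    exists_norm_eq_iInf_of_complete_convex (hKne n) (isClosed_closure.isComplete) (hKconv n) 0
  set v : ℕ → H := fun n => (hmin n).choose with hv
  have hvK : ∀ n, v n ∈ K n := fun n => (hmin n).choose_spec.1
  set δ : ℕ → ℝ := fun n => ⨅ w : K n, ‖(0:H) - w‖ with hδ
  have hvn : ∀ n, ‖v n‖ = δ n := by
    intro n
    have := (hmin n).choose_spec.2
    rwa [zero_sub, norm_neg] at this
  haveI : ∀ n, Nonempty (K n) := fun n => (hKne n).to_subtype
  have hbdd : ∀ n, BddBelow (Set.range fun w : K n => ‖(0:H) - w‖) :=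
    fun n => ⟨0, Set.forall_mem_range.2 fun _ => norm_nonneg _⟩
  have hδle : ∀ n (w : H), w ∈ K n → δ n ≤ ‖w‖ := by
    intro n w hw
    have := ciInf_le (hbdd n) (⟨w, hw⟩ : K n)
    rwa [zero_sub, norm_neg] at this
  have hδ0 : ∀ n, 0 ≤ δ n := fun n => le_ciInf fun w => norm_nonneg _
  have hδmono : Monotone δ := by
    intro n m hnm
    refine le_ciInf fun w => ?_
    rw [zero_sub, norm_neg]
    exact hδle n w (hKmono hnm w.2)
  have hδC : ∀ n, δ n ≤ C := fun n => le_trans (hδle n (f n)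
    (subset_closure (subset_convexHull ℝ _ ⟨n, le_refl n, rfl⟩))) (hC n)
  have hbddA : BddAbove (Set.range δ) := ⟨C, Set.forall_mem_range.2 hδC⟩
  set Λ : ℝ := ⨆ n, δ n with hΛ
  have hδΛ : ∀ n, δ n ≤ Λ := fun n => le_ciSup hbddA n
  have hδtendsto : Tendsto δ atTop (𝓝 Λ) := tendsto_atTop_ciSup hδmono hbddA
  -- Cauchy estimate
  have key : ∀ N n m : ℕ, N ≤ n → N ≤ m → ‖v n - v m‖^2 ≤ 4*(Λ^2 - δ N^2) := by
    intro N n m hn hm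
    have hmid : (1/2:ℝ) • v n + (1/2:ℝ) • v m ∈ K N :=
      (hKconv N) (hKmono hn (hvK n)) (hKmono hm (hvK m)) (by norm_num) (by norm_num) (by norm_num)
    have hmidnorm : δ N ≤ ‖(1/2:ℝ) • v n + (1/2:ℝ) • v m‖ := hδle N _ hmid
    have hpar := parallelogram_law_with_norm ℝ (v n) (v m)
    have h1 : ‖v n + v m‖ = 2 * ‖(1/2:ℝ) • v n + (1/2:ℝ) • v m‖ := by
      rw [← smul_add, norm_smul]
      simp only [one_div, norm_inv, Real.norm_ofNat]
      ring
    have hn2 : ‖v n‖ = δ n := hvn n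
    have hm2 : ‖v m‖ = δ m := hvn m
    have hδNn : δ N ≤ δ n := hδmono hn
    have hδNm : δ N ≤ δ m := hδmono hm
    have hnΛ : δ n ≤ Λ := hδΛ n
    have hmΛ : δ m ≤ Λ := hδΛ m
    have h0N : 0 ≤ δ N := hδ0 N
    nlinarith [norm_nonneg (v n - v m), norm_nonneg ((1/2:ℝ) • v n + (1/2:ℝ) • v m)]
  have hcauchy : CauchySeq v := by
    refine cauchySeq_of_le_tendsto_0 (fun N => Real.sqrt (4*(Λ^2 - δ N^2))) ?_ ?_
    · intro n m N hn hm
      rw [dist_eq_norm]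
      have := key N n m hn hm
      calc ‖v n - v m‖ = Real.sqrt (‖v n - v m‖^2) := by
            rw [Real.sqrt_sq (norm_nonneg _)]
        _ ≤ Real.sqrt (4*(Λ^2 - δ N^2)) := Real.sqrt_le_sqrt this
    · have : Tendsto (fun N => 4*(Λ^2 - δ N^2)) atTop (𝓝 (4*(Λ^2 - Λ^2))) := by
        exact (tendsto_const_nhds.mul ((tendsto_const_nhds.sub
          ((hδtendsto.pow 2)))))
      simp only [sub_self, mul_zero] at this
      have := this.sqrt
      rwa [Real.sqrt_zero] at this
  obtain ⟨w, hw⟩ := cauchySeq_tendsto_of_complete hcauchy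
  refine ⟨w, fun n => ?_⟩
  refine isClosed_closure.mem_of_tendsto hw ?_
  filter_upwards [eventually_ge_atTop n] with m hm
  exact hKmono hm (hvK m)

lemma ae_tendsto_of_summable_eLpNorm {α E : Type*} [MeasurableSpace α] {μ : Measure α}
    [NormedAddCommGroup E] {f : ℕ → α → E} {g : α → E}
    (hf : ∀ n, AEStronglyMeasurable (f n) μ) (hg : AEStronglyMeasurable g μ)
    (ε : ℕ → ℝ≥0∞) (hε : ∑' n, ε n ≠ ∞)
    (h : ∀ n, eLpNorm (f n - g) 1 μ ≤ ε n) :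
    ∀ᵐ x ∂μ, Tendsto (fun n => f n x) atTop (𝓝 (g x)) := by
  have hmeas : ∀ n, AEMeasurable (fun x => (‖f n x - g x‖₊ : ℝ≥0∞)) μ := fun n =>
    ((hf n).sub hg).enorm
  have hlin : ∫⁻ x, ∑' n, (‖f n x - g x‖₊ : ℝ≥0∞) ∂μ < ∞ := by
    rw [lintegral_tsum hmeas]
    refine lt_of_le_of_lt (ENNReal.tsum_le_tsum fun n => ?_) hε.lt_top
    have := h n
    rwa [eLpNorm_one_eq_lintegral_enorm] at this
  have hae : ∀ᵐ x ∂μ, ∑' n, (‖f n x - g x‖₊ : ℝ≥0∞) < ∞ :=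
    ae_lt_top' (AEMeasurable.ennreal_tsum hmeas) hlin.ne
  filter_upwards [hae] with x hx
  have h0 : Tendsto (fun n => (‖f n x - g x‖₊ : ℝ≥0∞)) atTop (𝓝 0) :=
    ENNReal.tendsto_atTop_zero_of_tsum_ne_top hx.ne
  rw [tendsto_iff_dist_tendsto_zero]
  have := (ENNReal.tendsto_toReal (by simp)).comp h0
  simpa [dist_eq_norm, Function.comp_def, ENNReal.coe_toReal, coe_nnnorm] using this

lemma coeFn_combo {α E : Type*} [MeasurableSpace α] {μ : Measure α}
    [NormedAddCommGroup E] [NormedSpace ℝ E] {p : ℝ≥0∞} [Fact (1 ≤ p)]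
    (s : Finset ℕ) (c : ℕ → ℝ) (F : ℕ → α → E) (hF : ∀ i, MemLp (F i) p μ) :
    ⇑(∑ i ∈ s, c i • (hF i).toLp (F i)) =ᵐ[μ] fun ω => ∑ i ∈ s, c i • F i ω := by
  classical
  induction s using Finset.induction_on with
  | empty => exact Lp.coeFn_zero (E := E) (p := p) (μ := μ)
  | @insert a s ha ih =>
    rw [Finset.sum_insert ha]
    filter_upwards [Lp.coeFn_add (c a • (hF a).toLp (F a)) (∑ i ∈ s, c i • (hF i).toLp (F i)),
      Lp.coeFn_smul (c a) ((hF a).toLp (F a)), (hF a).coeFn_toLp, ih] with ω h1 h2 h3 h4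
    simp only [Finset.sum_insert ha, h1, Pi.add_apply, h2, Pi.smul_apply, h3, h4]

/-- **Komlos-type principle of forward convex combinations.**  If `(λₙ)` is an a.s.
bounded sequence of `ℝᵈ`-valued random vectors, then there are forward convex
combinations `μₙ = Σ_{k≤l(n)} t(n,k) λ_{n+k}` converging almost surely. -/
theorem forward_convex_combinations_converge_ae
    {Ω : Type*} [MeasurableSpace Ω] (μ : Measure Ω) [IsProbabilityMeasure μ] (d : ℕ)
    (lam : ℕ → Ω → (Fin d → ℝ)) (hmeas : ∀ n, AEMeasurable (lam n) μ)
    (hbdd : ∀ᵐ ω ∂μ, ∃ C : ℝ, ∀ n, ‖lam n ω‖ ≤ C) :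
    ∃ (l : ℕ → ℕ) (t : ℕ → ℕ → ℝ) (m : Ω → Fin d → ℝ),
      (∀ n k, k ≤ l n → 0 ≤ t n k) ∧
      (∀ n, ∑ k ∈ Finset.range (l n + 1), t n k = 1) ∧
      AEMeasurable m μ ∧
      ∀ᵐ ω ∂μ, Tendsto (fun n => ∑ k ∈ Finset.range (l n + 1), t n k • lam (n + k) ω)
        atTop (nhds (m ω)) := by
  classical
  set g : ℕ → Ω → (Fin d → ℝ) := fun n => (hmeas n).mk (lam n) with hgdef
  have hgmeas : ∀ n, Measurable (g n) := fun n => (hmeas n).measurable_mk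
  have hgeq : ∀ n, lam n =ᵐ[μ] g n := fun n => (hmeas n).ae_eq_mk
  set Φ : Ω → ℝ≥0∞ := fun ω => ⨆ n, (‖g n ω‖₊ : ℝ≥0∞) with hΦdef
  have hΦmeas : Measurable Φ := Measurable.iSup fun n => (hgmeas n).nnnorm.coe_nnreal_ennreal
  have hΦfin : ∀ᵐ ω ∂μ, Φ ω < ∞ := by
    filter_upwards [hbdd, ae_all_iff.mpr hgeq] with ω hC hωeq
    obtain ⟨C, hC⟩ := hC
    refine lt_of_le_of_lt (iSup_le fun n => ?_) (ENNReal.ofReal_lt_top (r := C))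
    rw [show ((‖g n ω‖₊ : ℝ≥0∞)) = ENNReal.ofReal ‖g n ω‖ from (ofReal_norm_eq_enorm _).symm, ← hωeq n]
    exact ENNReal.ofReal_le_ofReal (hC n)
  set ρ : Ω → ℝ := fun ω => ((1 + Φ ω)⁻¹).toReal with hρdef
  have hρmeas : Measurable ρ := (measurable_const.add hΦmeas).inv.ennreal_toReal
  have hρ0 : ∀ ω, 0 ≤ ρ ω := fun ω => ENNReal.toReal_nonneg
  -- bound : ρ ω * ‖g n ω‖ ≤ 1
  have hρg : ∀ n ω, ρ ω * ‖g n ω‖ ≤ 1 := by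
    intro n ω
    by_cases hω : Φ ω = ∞
    · simp [hρdef, hω]
    · have h1 : (1 : ℝ≥0∞) + Φ ω ≠ ⊤ := by simp [hω]
      have ha : ‖g n ω‖ ≤ (Φ ω).toReal := by
        rw [← coe_nnnorm (g n ω)]
        have : (‖g n ω‖₊ : ℝ≥0∞) ≤ Φ ω := le_iSup (fun n => (‖g n ω‖₊ : ℝ≥0∞)) n
        simpa using ENNReal.toReal_mono hω this
      have hρω : ρ ω = (1 + (Φ ω).toReal)⁻¹ := by
        rw [hρdef]
        simp only []
        rw [ENNReal.toReal_inv, ENNReal.toReal_add (by simp) hω, ENNReal.toReal_one]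
      have hpos : (0:ℝ) < 1 + (Φ ω).toReal := by positivity
      rw [hρω]
      calc (1 + (Φ ω).toReal)⁻¹ * ‖g n ω‖
          ≤ (1 + (Φ ω).toReal)⁻¹ * (1 + (Φ ω).toReal) := by
            have : ‖g n ω‖ ≤ 1 + (Φ ω).toReal := by linarith
            exact mul_le_mul_of_nonneg_left this (inv_nonneg.mpr hpos.le)
        _ = 1 := inv_mul_cancel₀ hpos.ne'
  set h : ℕ → Ω → EuclideanSpace ℝ (Fin d) :=
    fun n ω => (EuclideanSpace.equiv (Fin d) ℝ).symm (ρ ω • g n ω) with hhdef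
  have hhmeas : ∀ n, StronglyMeasurable (h n) := fun n =>
    (EuclideanSpace.equiv (Fin d) ℝ).symm.continuous.comp_stronglyMeasurable
      (hρmeas.stronglyMeasurable.smul (hgmeas n).stronglyMeasurable)
  have hhbdd : ∀ n ω, ‖h n ω‖ ≤ Real.sqrt d := by
    intro n ω
    rw [EuclideanSpace.norm_eq]
    have hcoord : ∀ i : Fin d, ‖(h n ω) i‖ ≤ 1 := by
      intro i
      have : (h n ω) i = ρ ω * (g n ω i) := rfl
      rw [this, Real.norm_eq_abs, abs_mul, abs_of_nonneg (hρ0 ω)]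
      calc ρ ω * |g n ω i| ≤ ρ ω * ‖g n ω‖ := by
            have : |g n ω i| ≤ ‖g n ω‖ := by
              simpa [Real.norm_eq_abs] using norm_le_pi_norm (g n ω) i
            exact mul_le_mul_of_nonneg_left this (hρ0 ω)
        _ ≤ 1 := hρg n ω
    have hsum : (∑ i : Fin d, ‖(h n ω) i‖ ^ 2) ≤ (d : ℝ) := by
      calc (∑ i : Fin d, ‖(h n ω) i‖ ^ 2) ≤ ∑ _i : Fin d, (1:ℝ) :=
            Finset.sum_le_sum fun i _ => by
              have := hcoord i
              nlinarith [norm_nonneg ((h n ω) i)]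
        _ = (d : ℝ) := by simp
    exact Real.sqrt_le_sqrt hsum
  -- Lp elements
  have hmem : ∀ n, MemLp (h n) 2 μ := fun n =>
    (memLp_top_of_bound (hhmeas n).aestronglyMeasurable (Real.sqrt d)
      (Filter.Eventually.of_forall (hhbdd n))).mono_exponent le_top
  set f : ℕ → Lp (EuclideanSpace ℝ (Fin d)) 2 μ := fun n => (hmem n).toLp (h n) with hfdef
  have hfnorm : ∀ n, ‖f n‖ ≤ Real.sqrt d := by
    intro n
    have hb : ∀ᵐ ω ∂μ, ‖(f n : Ω → EuclideanSpace ℝ (Fin d)) ω‖ ≤ Real.sqrt d := by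
      filter_upwards [(hmem n).coeFn_toLp] with ω hω
      rw [hω]; exact hhbdd n ω
    have := Lp.norm_le_of_ae_bound (Real.sqrt_nonneg d) hb
    simpa [measureUnivNNReal, measure_univ] using this
  obtain ⟨v, hv⟩ := exists_mem_closure_convexHull_tails f (Real.sqrt d) hfnorm
  -- choose forward convex combinations close to v
  have hsel : ∀ n : ℕ, ∃ (L : ℕ) (c : ℕ → ℝ), (∀ j, 0 ≤ c j) ∧
      (∑ j ∈ Finset.range (L+1), c j = 1) ∧
      ‖(∑ j ∈ Finset.range (L+1), c j • f (n+j)) - v‖ ≤ (1/2:ℝ)^n := by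
    intro n
    have hvn := hv n
    rw [Metric.mem_closure_iff] at hvn
    obtain ⟨w, hwmem, hwdist⟩ := hvn ((1/2:ℝ)^n) (by positivity)
    obtain ⟨L, c, h0, h1, h2⟩ := exists_forward_combo f n w hwmem
    refine ⟨L, c, h0, h1, ?_⟩
    rw [h2, ← dist_eq_norm, dist_comm]
    exact hwdist.le
  choose l t ht0 ht1 htclose using hsel
  set S : ℕ → Ω → EuclideanSpace ℝ (Fin d) :=
    fun n ω => ∑ j ∈ Finset.range (l n + 1), t n j • h (n+j) ω with hSdef
  have hSmeas : ∀ n, StronglyMeasurable (S n) := fun n =>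
    Finset.stronglyMeasurable_fun_sum _ fun j _ => (hhmeas (n+j)).const_smul (t n j)
  have hScoe : ∀ n, ⇑(∑ j ∈ Finset.range (l n + 1), t n j • f (n+j)) =ᵐ[μ] S n := by
    intro n
    have := coeFn_combo (Finset.range (l n + 1)) (t n) (fun j => h (n + j))
      (fun j => hmem (n + j))
    exact this
  -- eLpNorm estimates
  have hε : ∀ n, eLpNorm (S n - ⇑v) 1 μ ≤ ENNReal.ofReal ((1/2:ℝ)^n) := by
    intro n
    set W : Lp (EuclideanSpace ℝ (Fin d)) 2 μ := ∑ j ∈ Finset.range (l n + 1), t n j • f (n+j)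
    have hae : S n - ⇑v =ᵐ[μ] ⇑(W - v) := by
      filter_upwards [hScoe n, Lp.coeFn_sub W v] with ω h1 h2
      show S n ω - (⇑v) ω = ⇑(W - v) ω
      rw [h2, ← h1]
      rfl
    have h2eq : eLpNorm (S n - ⇑v) 2 μ = ENNReal.ofReal ‖W - v‖ := by
      rw [eLpNorm_congr_ae hae, Lp.norm_def,
        ENNReal.ofReal_toReal (Lp.eLpNorm_ne_top (W - v))]
    calc eLpNorm (S n - ⇑v) 1 μ ≤ eLpNorm (S n - ⇑v) 2 μ :=
          eLpNorm_le_eLpNorm_of_exponent_le (by norm_num)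
            (((hSmeas n).aestronglyMeasurable).sub (Lp.aestronglyMeasurable v))
      _ = ENNReal.ofReal ‖W - v‖ := h2eq
      _ ≤ ENNReal.ofReal ((1/2:ℝ)^n) := ENNReal.ofReal_le_ofReal (htclose n)
  have hεsum : ∑' n, ENNReal.ofReal ((1/2:ℝ)^n) ≠ ∞ := by
    rw [← ENNReal.ofReal_tsum_of_nonneg (fun n => by positivity)
      (summable_geometric_of_lt_one (by norm_num) (by norm_num))]
    exact ENNReal.ofReal_ne_top
  have hconv : ∀ᵐ ω ∂μ, Tendsto (fun n => S n ω) atTop (𝓝 (v ω)) :=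
    ae_tendsto_of_summable_eLpNorm (fun n => (hSmeas n).aestronglyMeasurable)
      (Lp.aestronglyMeasurable v) _ hεsum hε
  -- the limit function
  set m : Ω → Fin d → ℝ :=
    fun ω => (1 + Φ ω).toReal • (EuclideanSpace.equiv (Fin d) ℝ) (v ω) with hmdef
  have hmmeas : AEMeasurable m μ := by
    have h1 : AEStronglyMeasurable (fun ω => (EuclideanSpace.equiv (Fin d) ℝ) (v ω)) μ :=
      (EuclideanSpace.equiv (Fin d) ℝ).continuous.comp_aestronglyMeasurable
        (Lp.aestronglyMeasurable v)
    have h2 : AEStronglyMeasurable m μ :=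
      ((measurable_const.add hΦmeas).ennreal_toReal.aemeasurable.aestronglyMeasurable).smul h1
    exact h2.aemeasurable
  refine ⟨l, t, m, fun n k _ => ht0 n k, ht1, hmmeas, ?_⟩
  filter_upwards [hΦfin, ae_all_iff.mpr hgeq, hconv] with ω hfin hωeq hlim
  set r : ℝ := (1 + Φ ω).toReal with hrdef
  have h1top : (1 : ℝ≥0∞) + Φ ω ≠ ⊤ := by simp [hfin.ne]
  have hrρ : r * ρ ω = 1 := by
    have hρω : ρ ω = r⁻¹ := by rw [hρdef, hrdef]; exact ENNReal.toReal_inv _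
    have hrpos : 0 < r := ENNReal.toReal_pos (by simp) h1top
    rw [hρω, mul_inv_cancel₀ hrpos.ne']
  have hfun : ∀ n, (∑ k ∈ Finset.range (l n + 1), t n k • lam (n + k) ω)
      = r • (EuclideanSpace.equiv (Fin d) ℝ) (S n ω) := by
    intro n
    rw [hSdef]
    rw [map_sum, Finset.smul_sum]
    refine Finset.sum_congr rfl fun k hk => ?_
    rw [hωeq (n+k)]
    rw [_root_.map_smul, (EuclideanSpace.equiv (Fin d) ℝ).apply_symm_apply,
      smul_comm r (t n k), smul_smul r, hrρ, one_smul]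
  have : Tendsto (fun n => r • (EuclideanSpace.equiv (Fin d) ℝ) (S n ω)) atTop
      (𝓝 (r • (EuclideanSpace.equiv (Fin d) ℝ) (v ω))) :=
    (((EuclideanSpace.equiv (Fin d) ℝ).continuous.tendsto _).comp hlim).const_smul r
  simpa only [hfun] using this

end RandomNormed
end

section
/- Let x₁,…,x_d ∈ L⁰(F,ℝᵈ). The L⁰-convex hull Conv_{L⁰}{x₁,…,x_d} := {λ₁x₁ + ⋯ + λ_d x_d : λᵢ ∈ L⁰₊(F), Σᵢ λᵢ = 1} is a closed subset of L⁰(F,ℝᵈ) in the topology of convergence in probability. -/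
open MeasureTheory Filter Topology

namespace RandomNormed

/-- Membership (as an equivalence class) in the `L⁰`-convex hull
`Conv_{L⁰}{x₁, …, x_d} = {Σᵢ λᵢ xᵢ : λᵢ ∈ L⁰₊(F), Σᵢ λᵢ = 1}` of `x₁, …, x_d ∈ L⁰(F,ℝᵈ)`. -/
def MemL0ConvexHull {Ω : Type*} [MeasurableSpace Ω] (μ : Measure Ω) (d : ℕ)
    (x : Fin d → Ω → (Fin d → ℝ)) (y : Ω → (Fin d → ℝ)) : Prop :=
  ∃ lam : Fin d → Ω → ℝ, (∀ i, AEMeasurable (lam i) μ) ∧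
    (∀ i, ∀ᵐ ω ∂μ, 0 ≤ lam i ω) ∧ (∀ᵐ ω ∂μ, ∑ i, lam i ω = 1) ∧
    ∀ᵐ ω ∂μ, y ω = ∑ i, lam i ω • x i ω


private noncomputable def sqN {d : ℕ} (l : Fin d → ℝ) : ℝ := ∑ i, (l i)^2

private lemma sqN_nonneg {d : ℕ} (l : Fin d → ℝ) : 0 ≤ sqN l :=
  Finset.sum_nonneg fun _ _ => sq_nonneg _

private lemma sqN_cont {d : ℕ} : Continuous (sqN (d := d)) :=
  continuous_finset_sum _ fun i _ => (continuous_apply i).pow 2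

private lemma sqN_le_one {d : ℕ} {l : Fin d → ℝ} (hl : l ∈ stdSimplex ℝ (Fin d)) :
    sqN l ≤ 1 := by
  have h1 : ∀ i, l i ≤ 1 := fun i => by
    calc l i ≤ ∑ j, l j := Finset.single_le_sum (fun j _ => hl.1 j) (Finset.mem_univ i)
    _ = 1 := hl.2
  calc sqN l ≤ ∑ i, l i := Finset.sum_le_sum fun i _ => by nlinarith [hl.1 i, h1 i]
  _ = 1 := hl.2

private lemma sq_min_unique {d : ℕ} {S : Set (Fin d → ℝ)} (hS : Convex ℝ S)
    {a b : Fin d → ℝ} (ha : a ∈ S) (hb : b ∈ S)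
    (hma : ∀ c ∈ S, sqN a ≤ sqN c) (hmb : ∀ c ∈ S, sqN b ≤ sqN c) : a = b := by
  have hmid : (1/2 : ℝ) • a + (1/2 : ℝ) • b ∈ S :=
    hS ha hb (by norm_num) (by norm_num) (by norm_num)
  have hab : sqN a = sqN b := le_antisymm (hma b hb) (hmb a ha)
  have hkey : sqN ((1/2 : ℝ) • a + (1/2 : ℝ) • b)
      = (sqN a + sqN b)/2 - sqN (fun i => (a i - b i)/2) := by
    simp only [sqN, Pi.add_apply, Pi.smul_apply, smul_eq_mul]
    rw [← Finset.sum_add_distrib, Finset.sum_div, ← Finset.sum_sub_distrib]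
    exact Finset.sum_congr rfl fun i _ => by ring
  have h1 : sqN a ≤ sqN ((1/2 : ℝ) • a + (1/2 : ℝ) • b) := hma _ hmid
  have h2 : sqN (fun i => (a i - b i)/2) ≤ 0 := by rw [hkey] at h1; linarith [hab]
  have h3 : sqN (fun i => (a i - b i)/2) = 0 := le_antisymm h2 (sqN_nonneg _)
  funext i
  have h4 : ∀ j ∈ Finset.univ, ((fun i => (a i - b i)/2) j)^2 = 0 := by
    rw [← Finset.sum_eq_zero_iff_of_nonneg (fun j _ => sq_nonneg _)]
    exact h3
  have h5 := h4 i (Finset.mem_univ i)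
  have := pow_eq_zero_iff (n := 2) (by norm_num) |>.mp h5
  simp only at this
  linarith [this]

private lemma fiber_convex {d : ℕ} (w : Fin d → (Fin d → ℝ)) (v : Fin d → ℝ) :
    Convex ℝ {a | a ∈ stdSimplex ℝ (Fin d) ∧ ∑ i, a i • w i = v} := by
  intro a ha b hb s t hs ht hst
  refine ⟨convex_stdSimplex ℝ _ ha.1 hb.1 hs ht hst, ?_⟩
  have hpt : ∀ i, (s • a + t • b) i • w i = s • (a i • w i) + t • (b i • w i) := fun i => by
    simp only [Pi.add_apply, Pi.smul_apply, smul_eq_mul, mul_smul, ← add_smul]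
    rw [← smul_assoc, ← smul_assoc, ← add_smul]
    norm_num
  rw [Finset.sum_congr rfl fun i _ => hpt i, Finset.sum_add_distrib,
    ← Finset.smul_sum, ← Finset.smul_sum, ha.2, hb.2, ← add_smul, hst, one_smul]

/-- the distance function `ω ↦ λ ↦ dist (∑ λᵢ xᵢ'(ω)) (z'(ω))`. -/
private noncomputable def gd {Ω : Type*} {d : ℕ} (x' : Fin d → Ω → Fin d → ℝ)
    (z' : Ω → Fin d → ℝ) (ω : Ω) (l : Fin d → ℝ) : ℝ :=
  dist (∑ i, l i • x' i ω) (z' ω)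

private lemma gd_nonneg {Ω : Type*} {d : ℕ} (x' : Fin d → Ω → Fin d → ℝ)
    (z' : Ω → Fin d → ℝ) (ω : Ω) (l : Fin d → ℝ) : 0 ≤ gd x' z' ω l := dist_nonneg

private lemma gd_meas {Ω : Type*} [MeasurableSpace Ω] {d : ℕ}
    {x' : Fin d → Ω → Fin d → ℝ} {z' : Ω → Fin d → ℝ}
    (hx' : ∀ i, Measurable (x' i)) (hz' : Measurable z') (l : Fin d → ℝ) :
    Measurable fun ω => gd x' z' ω l :=
  (Finset.measurable_sum _ fun i _ => (hx' i).const_smul (l i)).dist hz'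

private lemma gd_cont {Ω : Type*} {d : ℕ} (x' : Fin d → Ω → Fin d → ℝ)
    (z' : Ω → Fin d → ℝ) (ω : Ω) : Continuous (gd x' z' ω) :=
  Continuous.dist (continuous_finset_sum _ fun i _ => (continuous_apply i).smul continuous_const)
    continuous_const

/-- Existence of a measurable (minimal-norm) selection of convex-combination coefficients. -/
private lemma exists_selection {Ω : Type*} [MeasurableSpace Ω] {μ : Measure Ω} {d : ℕ}
    (hd : 0 < d) (x' : Fin d → Ω → Fin d → ℝ) (hx' : ∀ i, Measurable (x' i))
    (z' : Ω → Fin d → ℝ) (hz' : Measurable z')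
    (hae : ∀ᵐ ω ∂μ, ∃ a ∈ stdSimplex ℝ (Fin d), ∑ i, a i • x' i ω = z' ω) :
    ∃ lam : Ω → (Fin d → ℝ), AEMeasurable lam μ ∧
      ∀ᵐ ω ∂μ, lam ω ∈ stdSimplex ℝ (Fin d) ∧ ∑ i, lam ω i • x' i ω = z' ω := by
  classical
  -- a dense sequence in the standard simplex
  have hΔne : (fun _ : Fin d => (d:ℝ)⁻¹) ∈ stdSimplex ℝ (Fin d) := by
    constructor
    · intro i; positivity
    · simp only [Finset.sum_const, Finset.card_univ, Fintype.card_fin, nsmul_eq_mul]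
      field_simp
  haveI : Nonempty ↥(stdSimplex ℝ (Fin d)) := ⟨⟨_, hΔne⟩⟩
  obtain ⟨Q, hQmem, hQd⟩ : ∃ Q : ℕ → (Fin d → ℝ), (∀ m, Q m ∈ stdSimplex ℝ (Fin d)) ∧
      ∀ a ∈ stdSimplex ℝ (Fin d), ∀ ε : ℝ, 0 < ε → ∃ m, dist a (Q m) < ε := by
    refine ⟨fun m => (TopologicalSpace.denseSeq ↥(stdSimplex ℝ (Fin d)) m).1,
      fun m => (TopologicalSpace.denseSeq ↥(stdSimplex ℝ (Fin d)) m).2, fun a ha ε hε => ?_⟩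
    obtain ⟨m, hm⟩ := Metric.denseRange_iff.mp
      (TopologicalSpace.denseRange_denseSeq ↥(stdSimplex ℝ (Fin d))) ⟨a, ha⟩ ε hε
    exact ⟨m, by simpa [Subtype.dist_eq] using hm⟩
  -- the approximation scheme
  set F : ℕ → ℕ → Ω → ℝ := fun n m ω =>
    if gd x' z' ω (Q m) < 1/((n:ℝ)+1) then sqN (Q m) else 2 with hF
  have hFmeas : ∀ n m, Measurable (F n m) := fun n m =>
    Measurable.ite (measurableSet_lt (gd_meas hx' hz' (Q m)) measurable_const)
      measurable_const measurable_const
  have hF0 : ∀ n m ω, 0 ≤ F n m ω := by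
    intro n m ω; rw [hF]; dsimp only; split_ifs
    · exact sqN_nonneg _
    · norm_num
  set I : ℕ → Ω → ℝ := fun n ω => ⨅ m, F n m ω with hI
  have hImeas : ∀ n, Measurable (I n) := fun n => Measurable.iInf fun m => hFmeas n m
  have hIbdd : ∀ n ω, BddBelow (Set.range fun m => F n m ω) := fun n ω =>
    ⟨0, by rintro v ⟨m, rfl⟩; exact hF0 n m ω⟩
  have hIleF : ∀ n m ω, I n ω ≤ F n m ω := fun n m ω => ciInf_le (hIbdd n ω) m
  have hPex : ∀ n ω, ∃ m, F n m ω < I n ω + 1/((n:ℝ)+1) := fun n ω =>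
    exists_lt_of_ciInf_lt (lt_add_of_pos_right _ (by positivity))
  set idx : ℕ → Ω → ℕ := fun n ω => Nat.find (hPex n ω) with hidx
  have hidxmeas : ∀ n, Measurable (idx n) := fun n =>
    measurable_find (hPex n) fun k =>
      measurableSet_lt (hFmeas n k) ((hImeas n).add_const _)
  set p : ℕ → Ω → (Fin d → ℝ) := fun n ω => Q (idx n ω) with hp
  have hpmeas : ∀ n, Measurable (p n) := fun n => measurable_from_top.comp (hidxmeas n)
  have hpmem : ∀ n ω, p n ω ∈ stdSimplex ℝ (Fin d) := fun n ω => hQmem _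
  -- the minimal-norm selection
  set lamStar : Ω → (Fin d → ℝ) := fun ω =>
    if h : ∃ a, (a ∈ stdSimplex ℝ (Fin d) ∧ ∑ i, a i • x' i ω = z' ω) ∧
        ∀ b, (b ∈ stdSimplex ℝ (Fin d) ∧ ∑ i, b i • x' i ω = z' ω) → sqN a ≤ sqN b
    then h.choose else Q 0 with hlamStar
  have key : ∀ᵐ ω ∂μ,
      (lamStar ω ∈ stdSimplex ℝ (Fin d) ∧ ∑ i, lamStar ω i • x' i ω = z' ω) ∧
      Tendsto (fun n => p n ω) atTop (𝓝 (lamStar ω)) := by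
    filter_upwards [hae] with ω hωS
    have hSne : ∃ a, a ∈ {a | a ∈ stdSimplex ℝ (Fin d) ∧ ∑ i, a i • x' i ω = z' ω} := by
      obtain ⟨a, ha, he⟩ := hωS; exact ⟨a, ha, he⟩
    have hsumcont : Continuous fun l : Fin d → ℝ => ∑ i, l i • x' i ω :=
      continuous_finset_sum _ fun i _ => (continuous_apply i).smul continuous_const
    have hScl : IsClosed {a | a ∈ stdSimplex ℝ (Fin d) ∧ ∑ i, a i • x' i ω = z' ω} :=
      (isClosed_stdSimplex ℝ (Fin d)).inter (isClosed_eq hsumcont continuous_const)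
    have hScp : IsCompact {a | a ∈ stdSimplex ℝ (Fin d) ∧ ∑ i, a i • x' i ω = z' ω} :=
      IsCompact.of_isClosed_subset (isCompact_stdSimplex ℝ (Fin d)) hScl fun a ha => ha.1
    obtain ⟨astar, hastar, hminOn⟩ := hScp.exists_isMinOn hSne sqN_cont.continuousOn
    have hex : ∃ a, (a ∈ stdSimplex ℝ (Fin d) ∧ ∑ i, a i • x' i ω = z' ω) ∧
        ∀ b, (b ∈ stdSimplex ℝ (Fin d) ∧ ∑ i, b i • x' i ω = z' ω) → sqN a ≤ sqN b :=
      ⟨astar, hastar, fun b hb => hminOn hb⟩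
    have hlS : (lamStar ω ∈ stdSimplex ℝ (Fin d) ∧ ∑ i, lamStar ω i • x' i ω = z' ω) ∧
        ∀ b, (b ∈ stdSimplex ℝ (Fin d) ∧ ∑ i, b i • x' i ω = z' ω) →
          sqN (lamStar ω) ≤ sqN b := by
      rw [hlamStar]; dsimp only; rw [dif_pos hex]; exact hex.choose_spec
    refine ⟨hlS.1, ?_⟩
    -- `I n ω ≤ sqN (lamStar ω)`
    have hIleN : ∀ n : ℕ, I n ω ≤ sqN (lamStar ω) := by
      intro n
      refine le_of_forall_pos_le_add ?_
      intro δ hδ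
      have hg0 : gd x' z' ω (lamStar ω) = 0 := by
        unfold gd; rw [dist_eq_zero]; exact hlS.1.2
      obtain ⟨r1, hr1, h1⟩ := Metric.continuous_iff.mp (gd_cont x' z' ω) (lamStar ω)
        (1/((n:ℝ)+1)) (by positivity)
      obtain ⟨r2, hr2, h2⟩ := Metric.continuous_iff.mp sqN_cont (lamStar ω) δ hδ
      obtain ⟨m, hm⟩ := hQd (lamStar ω) hlS.1.1 (min r1 r2) (lt_min hr1 hr2)
      have hgm : gd x' z' ω (Q m) < 1/((n:ℝ)+1) := by
        have h := h1 (Q m) (by rw [dist_comm]; exact hm.trans_le (min_le_left _ _))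
        rw [hg0, Real.dist_eq, sub_zero, abs_of_nonneg (gd_nonneg _ _ _ _)] at h
        exact h
      have hNm : sqN (Q m) < sqN (lamStar ω) + δ := by
        have h := h2 (Q m) (by rw [dist_comm]; exact hm.trans_le (min_le_right _ _))
        rw [Real.dist_eq] at h
        have := abs_lt.mp h
        linarith [this.1, this.2]
      calc I n ω ≤ F n m ω := hIleF n m ω
      _ = sqN (Q m) := by rw [hF]; dsimp only; rw [if_pos hgm]
      _ ≤ sqN (lamStar ω) + δ := le_of_lt hNm
    -- properties of `p n ω`
    have hp_spec : ∀ n : ℕ, gd x' z' ω (p n ω) < 1/((n:ℝ)+1) ∧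
        sqN (p n ω) < sqN (lamStar ω) + 1/((n:ℝ)+1) := by
      intro n
      have hFlt : F n (idx n ω) ω < I n ω + 1/((n:ℝ)+1) := Nat.find_spec (hPex n ω)
      have hI1 : I n ω ≤ 1 := (hIleN n).trans (sqN_le_one hlS.1.1)
      have h1n : 1/((n:ℝ)+1) ≤ 1 := by
        rw [div_le_one (by positivity)]; linarith [(by positivity : (0:ℝ) ≤ (n:ℝ))]
      by_cases hc : gd x' z' ω (Q (idx n ω)) < 1/((n:ℝ)+1)
      · refine ⟨hc, ?_⟩
        rw [hF] at hFlt; dsimp only at hFlt; rw [if_pos hc] at hFlt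
        calc sqN (p n ω) = sqN (Q (idx n ω)) := rfl
        _ < I n ω + 1/((n:ℝ)+1) := hFlt
        _ ≤ sqN (lamStar ω) + 1/((n:ℝ)+1) := by linarith [hIleN n]
      · exfalso
        rw [hF] at hFlt; dsimp only at hFlt; rw [if_neg hc] at hFlt
        linarith
    -- convergence of `p · ω` to `lamStar ω`
    apply tendsto_of_subseq_tendsto
    intro ns hns
    obtain ⟨b, hbΔ, ks, hks, hktend⟩ :=
      IsCompact.tendsto_subseq (isCompact_stdSimplex ℝ (Fin d)) (fun k => hpmem (ns k) ω)
    have hto : Tendsto (fun j => 1/((ns (ks j) : ℝ)+1)) atTop (𝓝 0) :=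
      tendsto_one_div_add_atTop_nhds_zero_nat.comp (hns.comp hks.tendsto_atTop)
    have hgb : gd x' z' ω b = 0 := by
      have htg : Tendsto (fun j => gd x' z' ω (p (ns (ks j)) ω)) atTop (𝓝 (gd x' z' ω b)) :=
        ((gd_cont x' z' ω).tendsto b).comp hktend
      have hle : gd x' z' ω b ≤ 0 :=
        le_of_tendsto_of_tendsto' htg hto fun j => le_of_lt (hp_spec (ns (ks j))).1
      exact le_antisymm hle (gd_nonneg _ _ _ _)
    have hbS : b ∈ stdSimplex ℝ (Fin d) ∧ ∑ i, b i • x' i ω = z' ω := by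
      refine ⟨hbΔ, ?_⟩
      unfold gd at hgb; rwa [dist_eq_zero] at hgb
    have hNb : sqN b ≤ sqN (lamStar ω) := by
      have htN : Tendsto (fun j => sqN (p (ns (ks j)) ω)) atTop (𝓝 (sqN b)) :=
        (sqN_cont.tendsto b).comp hktend
      have htN' : Tendsto (fun j => sqN (lamStar ω) + 1/((ns (ks j) : ℝ)+1)) atTop
          (𝓝 (sqN (lamStar ω))) := by
        simpa using tendsto_const_nhds.add hto
      exact le_of_tendsto_of_tendsto' htN htN' fun j => le_of_lt (hp_spec (ns (ks j))).2
    have hbmin : ∀ c, (c ∈ stdSimplex ℝ (Fin d) ∧ ∑ i, c i • x' i ω = z' ω) → sqN b ≤ sqN c :=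
      fun c hc => hNb.trans (hlS.2 c hc)
    have hbeq : b = lamStar ω :=
      sq_min_unique (fiber_convex (fun i => x' i ω) (z' ω)) hbS hlS.1
        (fun c hc => hbmin c hc) (fun c hc => hlS.2 c hc)
    exact ⟨ks, hbeq ▸ hktend⟩
  have hlamMeas : AEMeasurable lamStar μ :=
    aemeasurable_of_tendsto_metrizable_ae atTop (fun n => (hpmeas n).aemeasurable)
      (key.mono fun ω h => h.2)
  exact ⟨lamStar, hlamMeas, key.mono fun ω h => h.1⟩


/-- **The `L⁰`-convex hull of finitely many elements of `L⁰(F,ℝᵈ)` is closed** in the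
topology of convergence in probability: if each `yₙ` lies in the hull and `yₙ → z` in
measure, then `z` lies in the hull. -/
theorem L0_convex_hull_closed
    {Ω : Type*} [MeasurableSpace Ω] (μ : Measure Ω) [IsProbabilityMeasure μ] (d : ℕ)
    (x : Fin d → Ω → (Fin d → ℝ)) (hx : ∀ i, AEMeasurable (x i) μ)
    (y : ℕ → Ω → (Fin d → ℝ)) (z : Ω → (Fin d → ℝ)) (hz : AEMeasurable z μ)
    (hy : ∀ n, MemL0ConvexHull μ d x (y n))
    (hconv : TendstoInMeasure μ y atTop z) :
    MemL0ConvexHull μ d x z := by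
  classical
  haveI : (ae μ).NeBot := ae_neBot.mpr (IsProbabilityMeasure.ne_zero μ)
  rcases Nat.eq_zero_or_pos d with hd | hd
  · exfalso
    subst hd
    obtain ⟨lam, _, _, hsum, _⟩ := hy 0
    have h01 : ∀ᵐ ω ∂μ, (0:ℝ) = 1 := by
      filter_upwards [hsum] with ω h; simp at h
    obtain ⟨ω, hω⟩ := h01.exists
    norm_num at hω
  -- measurable representatives
  set x' : Fin d → Ω → (Fin d → ℝ) := fun i => (hx i).mk (x i) with hx'def
  set z' : Ω → (Fin d → ℝ) := hz.mk z with hz'def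
  have hx'meas : ∀ i, Measurable (x' i) := fun i => (hx i).measurable_mk
  have hz'meas : Measurable z' := hz.measurable_mk
  have hxe : ∀ᵐ ω ∂μ, ∀ i, x i ω = x' i ω := ae_all_iff.2 fun i => (hx i).ae_eq_mk
  have hze : ∀ᵐ ω ∂μ, z ω = z' ω := hz.ae_eq_mk
  -- a.e. convergent subsequence and a.e. data of the `y n`
  obtain ⟨ns, _, hnsae⟩ := hconv.exists_seq_tendsto_ae
  choose L hLmeas hL0 hLsum hLrep using hy
  -- a.e., `z' ω` is a convex combination of the `x' i ω`
  have hae : ∀ᵐ ω ∂μ, ∃ a ∈ stdSimplex ℝ (Fin d), ∑ i, a i • x' i ω = z' ω := by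
    filter_upwards [hnsae, hxe, hze, ae_all_iff.2 fun n => ae_all_iff.2 fun i => hL0 n i,
      ae_all_iff.2 hLsum, ae_all_iff.2 hLrep] with ω htend hxeq hzeq h0 hsum hrep
    have hsumcont : Continuous fun l : Fin d → ℝ => ∑ i, l i • x' i ω :=
      continuous_finset_sum _ fun i _ => (continuous_apply i).smul continuous_const
    have hKcl : IsClosed ((fun l : Fin d → ℝ => ∑ i, l i • x' i ω) '' stdSimplex ℝ (Fin d)) :=
      ((isCompact_stdSimplex ℝ (Fin d)).image hsumcont).isClosed
    have hmem : ∀ k, y (ns k) ω ∈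
        (fun l : Fin d → ℝ => ∑ i, l i • x' i ω) '' stdSimplex ℝ (Fin d) := by
      intro k
      refine ⟨fun i => L (ns k) i ω, ⟨fun i => h0 _ i, hsum _⟩, ?_⟩
      rw [hrep (ns k)]
      exact Finset.sum_congr rfl fun i _ => by rw [hxeq i]
    have hz'K : z' ω ∈ (fun l : Fin d → ℝ => ∑ i, l i • x' i ω) '' stdSimplex ℝ (Fin d) :=
      hKcl.mem_of_tendsto (hzeq ▸ htend) (Filter.Eventually.of_forall hmem)
    obtain ⟨a, haΔ, haeq⟩ := hz'K
    exact ⟨a, haΔ, haeq⟩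
  -- measurable selection
  obtain ⟨lam, hlamMeas, hlamProp⟩ := exists_selection hd x' hx'meas z' hz'meas hae
  refine ⟨fun i ω => lam ω i, fun i => (measurable_pi_apply i).comp_aemeasurable hlamMeas,
    ?_, ?_, ?_⟩
  · intro i; filter_upwards [hlamProp] with ω h using h.1.1 i
  · filter_upwards [hlamProp] with ω h using h.1.2
  · filter_upwards [hlamProp, hxe, hze] with ω h hxeq hzeq
    rw [hzeq, ← h.2]
    exact Finset.sum_congr rfl fun i _ => by rw [hxeq i]

end RandomNormed
end

section
/- Let x₁,…,x_d ∈ L⁰(F,ℝᵈ). The finitely generated L⁰-convex cone cone_{L⁰}{x₁,…,x_d} := {λ₁x₁ + ⋯ + λ_d x_d : λᵢ ∈ L⁰₊(F)} is a closed subset of L⁰(F,ℝᵈ) in the topology of convergence in probability. -/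
open Finset

variable {d : ℕ}

/-- Conical Carathéodory: any nonnegative combination equals a nonnegative combination
supported on a linearly independent subfamily. -/
lemma caratheodory_cone_aux (v : Fin d → (Fin d → ℝ)) :
    ∀ n (lam : Fin d → ℝ), (Finset.univ.filter fun i => lam i ≠ 0).card = n →
    (∀ i, 0 ≤ lam i) →
    ∃ (I : Finset (Fin d)) (mu : Fin d → ℝ),
      LinearIndependent ℝ (fun i : I => v i) ∧ (∀ i, 0 ≤ mu i) ∧ (∀ i ∉ I, mu i = 0) ∧
      ∑ i, mu i • v i = ∑ i, lam i • v i := by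
  intro n
  induction n using Nat.strong_induction_on with
  | _ n IH =>
    intro lam hcard hlam
    set I : Finset (Fin d) := Finset.univ.filter fun i => lam i ≠ 0 with hI
    by_cases hli : LinearIndependent ℝ (fun i : I => v i)
    · exact ⟨I, lam, hli, hlam, fun i hi => by
        simpa [hI] using hi, rfl⟩
    · obtain ⟨g, hgsum, i₀, hgi₀⟩ := Fintype.not_linearIndependent_iff.1 hli
      -- extend g to Fin d
      classical
      -- choose sign so that some coordinate is positive
      obtain ⟨g, hgsum, i₀, hgi₀⟩ :
          ∃ g : I → ℝ, ∑ i : I, g i • v i = 0 ∧ ∃ i : I, 0 < g i := by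
        rcases lt_or_gt_of_ne hgi₀ with h | h
        · exact ⟨-g, by simpa [neg_smul] using congrArg Neg.neg hgsum, i₀, by simpa using h⟩
        · exact ⟨g, hgsum, i₀, h⟩
      set c : Fin d → ℝ := fun i => if h : i ∈ I then g ⟨i, h⟩ else 0 with hc
      have hcsum : ∑ i, c i • v i = 0 := by
        rw [← Finset.sum_subset (Finset.subset_univ I)
          (fun i _ hi => by simp [hc, hi])]
        rw [← Finset.sum_coe_sort I (fun i => c i • v i)]
        simpa [hc] using hgsum
      have hczero : ∀ i ∉ I, c i = 0 := fun i hi => by simp [hc, hi]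
      have hcpos : ∃ i, 0 < c i := ⟨i₀, by simp [hc, i₀.2, hgi₀]⟩
      set T : Finset (Fin d) := Finset.univ.filter fun i => 0 < c i with hT
      have hTne : T.Nonempty := ⟨hcpos.choose, by simp [hT, hcpos.choose_spec]⟩
      have hTI : T ⊆ I := by
        intro i hi
        rw [hT, Finset.mem_filter] at hi
        by_contra h
        exact absurd (hczero i h) (ne_of_gt hi.2)
      set t : ℝ := T.inf' hTne fun i => lam i / c i with ht
      have htnn : 0 ≤ t := by
        apply Finset.le_inf'
        intro i hi
        rw [hT, Finset.mem_filter] at hi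
        exact div_nonneg (hlam i) hi.2.le
      set lam' : Fin d → ℝ := fun i => lam i - t * c i with hlam'
      have hlam'nn : ∀ i, 0 ≤ lam' i := by
        intro i
        by_cases hi : i ∈ T
        · have h1 : t ≤ lam i / c i := Finset.inf'_le _ hi
          rw [hT, Finset.mem_filter] at hi
          have := (le_div_iff₀ hi.2).1 h1
          simp only [hlam']; linarith
        · have hci : c i ≤ 0 := by
            by_contra h
            exact hi (by simp [hT, lt_of_not_ge h])
          have : t * c i ≤ 0 := mul_nonpos_of_nonneg_of_nonpos htnn hci
          simp only [hlam']; linarith [hlam i]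
      have hsum' : ∑ i, lam' i • v i = ∑ i, lam i • v i := by
        simp only [hlam', sub_smul, Finset.sum_sub_distrib, mul_smul]
        rw [← Finset.smul_sum, hcsum, smul_zero, sub_zero]
      obtain ⟨j, hjT, hjt⟩ := Finset.exists_mem_eq_inf' hTne fun i => lam i / c i
      have hjc : 0 < c j := by rw [hT, Finset.mem_filter] at hjT; exact hjT.2
      have hlam'j : lam' j = 0 := by
        simp only [hlam', ht, hjt]
        field_simp
        ring
      have hsub : (Finset.univ.filter fun i => lam' i ≠ 0) ⊂
          Finset.univ.filter fun i => lam i ≠ 0 := by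
        constructor
        · intro i hi
          rw [Finset.mem_filter] at hi ⊢
          refine ⟨mem_univ _, fun h => hi.2 ?_⟩
          have : i ∉ I := by simp [hI, h]
          simp [hlam', h, hczero i this]
        · intro h
          have hj1 : j ∈ Finset.univ.filter fun i => lam i ≠ 0 := hTI hjT
          have := h hj1
          rw [Finset.mem_filter] at this
          exact this.2 hlam'j
      have hlt : (Finset.univ.filter fun i => lam' i ≠ 0).card < n := by
        rw [← hcard]; exact Finset.card_lt_card hsub
      obtain ⟨I', mu, h1, h2, h3, h4⟩ := IH _ hlt lam' rfl hlam'nn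
      exact ⟨I', mu, h1, h2, h3, h4.trans hsum'⟩

lemma caratheodory_cone (v : Fin d → (Fin d → ℝ)) (lam : Fin d → ℝ) (hlam : ∀ i, 0 ≤ lam i) :
    ∃ (I : Finset (Fin d)) (mu : Fin d → ℝ),
      LinearIndependent ℝ (fun i : I => v i) ∧ (∀ i, 0 ≤ mu i) ∧ (∀ i ∉ I, mu i = 0) ∧
      ∑ i, mu i • v i = ∑ i, lam i • v i :=
  caratheodory_cone_aux v _ lam rfl hlam
variable {d : ℕ}

def coneSet (v : Fin d → (Fin d → ℝ)) : Set (Fin d → ℝ) :=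
  {w | ∃ mu : Fin d → ℝ, (∀ i, 0 ≤ mu i) ∧ ∑ i, mu i • v i = w}

lemma isClosed_subcone (v : Fin d → (Fin d → ℝ)) (I : Finset (Fin d))
    (hli : LinearIndependent ℝ (fun i : I => v i)) :
    IsClosed {w : Fin d → ℝ | ∃ mu : Fin d → ℝ,
      (∀ i, 0 ≤ mu i) ∧ (∀ i ∉ I, mu i = 0) ∧ ∑ i, mu i • v i = w} := by
  classical
  set L : (I → ℝ) →ₗ[ℝ] (Fin d → ℝ) :=
    { toFun := fun c => ∑ i : I, c i • v i
      map_add' := fun a b => by simp only [Pi.add_apply, add_smul, Finset.sum_add_distrib]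
      map_smul' := fun r a => by simp [mul_smul, Finset.smul_sum] } with hL
  have hker : LinearMap.ker L = ⊥ := by
    rw [LinearMap.ker_eq_bot']
    intro c hc
    funext i
    exact Fintype.linearIndependent_iff.1 hli c hc i
  have hemb := LinearMap.isClosedEmbedding_of_injective (f := L) hker
  have hclos : IsClosed {c : I → ℝ | ∀ i, 0 ≤ c i} := by
    have : {c : I → ℝ | ∀ i, 0 ≤ c i} = ⋂ i, (fun c : I → ℝ => c i) ⁻¹' Set.Ici 0 := by
      ext c; simp [Set.mem_iInter]
    rw [this]
    exact isClosed_iInter fun i => isClosed_Ici.preimage (continuous_apply i)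
  have himg : L '' {c : I → ℝ | ∀ i, 0 ≤ c i} = {w : Fin d → ℝ | ∃ mu : Fin d → ℝ,
      (∀ i, 0 ≤ mu i) ∧ (∀ i ∉ I, mu i = 0) ∧ ∑ i, mu i • v i = w} := by
    ext w
    constructor
    · rintro ⟨c, hc, rfl⟩
      refine ⟨fun i => if h : i ∈ I then c ⟨i, h⟩ else 0, fun i => ?_, fun i hi => by simp [hi], ?_⟩
      · by_cases h : i ∈ I
        · simpa [h] using hc ⟨i, h⟩
        · simp [h]
      · rw [← Finset.sum_subset (Finset.subset_univ I) (fun i _ hi => by simp [hi]),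
          ← Finset.sum_coe_sort I]
        simp [hL]
    · rintro ⟨mu, h1, h2, rfl⟩
      refine ⟨fun i => mu i, fun i => h1 i, ?_⟩
      simp only [hL, LinearMap.coe_mk, AddHom.coe_mk]
      show (∑ i : I, mu i • v i) = _
      rw [Finset.sum_coe_sort I (fun i => mu i • v i),
        Finset.sum_subset (Finset.subset_univ I) (fun i _ hi => by simp [h2 i hi])]
  rw [← himg]
  exact hemb.isClosedMap _ hclos

lemma isClosed_coneSet (v : Fin d → (Fin d → ℝ)) : IsClosed (coneSet v) := by
  classical
  have : coneSet v = ⋃ (I : {J : Finset (Fin d) // LinearIndependent ℝ (fun i : J => v i)}),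
      {w : Fin d → ℝ | ∃ mu : Fin d → ℝ,
        (∀ i, 0 ≤ mu i) ∧ (∀ i ∉ I.1, mu i = 0) ∧ ∑ i, mu i • v i = w} := by
    ext w
    constructor
    · rintro ⟨lam, hlam, rfl⟩
      obtain ⟨I, mu, h1, h2, h3, h4⟩ := caratheodory_cone v lam hlam
      exact Set.mem_iUnion.2 ⟨⟨I, h1⟩, mu, h2, h3, h4⟩
    · rintro hw
      obtain ⟨I, mu, h1, h2, h3⟩ := Set.mem_iUnion.1 hw
      exact ⟨mu, h1, h3⟩
  rw [this]
  exact isClosed_iUnion_of_finite fun I => isClosed_subcone v I.1 I.2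
noncomputable section
open Finset
variable {d : ℕ}

def dotR {d : ℕ} (a b : Fin d → ℝ) : ℝ := ∑ k, a k * b k

lemma dotR_nonneg_self (a : Fin d → ℝ) : 0 ≤ dotR a a :=
  Finset.sum_nonneg fun k _ => mul_self_nonneg _

lemma dotR_self_eq_zero {a : Fin d → ℝ} (h : dotR a a = 0) : a = 0 := by
  funext k
  have h2 := (Finset.sum_eq_zero_iff_of_nonneg (fun k _ => mul_self_nonneg (a k))).1 h k
    (Finset.mem_univ k)
  have := mul_self_eq_zero.1 h2
  simpa using this

lemma dotR_sum_right {ι : Type*} (a : Fin d → ℝ) (s : Finset ι) (f : ι → Fin d → ℝ) :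
    dotR a (∑ i ∈ s, f i) = ∑ i ∈ s, dotR a (f i) := by
  unfold dotR
  rw [Finset.sum_comm]
  congr 1
  funext k
  simp [Finset.mul_sum]

lemma dotR_smul_right (a : Fin d → ℝ) (r : ℝ) (b : Fin d → ℝ) :
    dotR a (r • b) = r * dotR a b := by
  unfold dotR
  rw [Finset.mul_sum]
  congr 1; funext k; simp; ring

def gramM (v : Fin d → Fin d → ℝ) (I : Finset (Fin d)) : Matrix I I ℝ :=
  Matrix.of fun i j => dotR (v i) (v j)

def selCoef (v : Fin d → Fin d → ℝ) (w : Fin d → ℝ) (I : Finset (Fin d)) : Fin d → ℝ :=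
  fun i => if h : i ∈ I then
    ((gramM v I).det)⁻¹ *
      ((gramM v I).adjugate.mulVec (fun j : I => dotR (v j) w)) ⟨i, h⟩
  else 0

lemma selCoef_eq (v : Fin d → Fin d → ℝ) (w : Fin d → ℝ) (I : Finset (Fin d))
    (hli : LinearIndependent ℝ (fun i : I => v i)) (mu : Fin d → ℝ)
    (hmu0 : ∀ i ∉ I, mu i = 0) (hsum : ∑ i, mu i • v i = w) :
    selCoef v w I = mu := by
  classical
  set G := gramM v I with hG
  set b : I → ℝ := fun j => dotR (v j) w with hb
  set c : I → ℝ := fun i => mu i with hc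
  have hsumI : ∑ i : I, mu i • v i = w := by
    rw [Finset.sum_coe_sort I (fun i => mu i • v i),
      Finset.sum_subset (Finset.subset_univ I) (fun i _ hi => by simp [hmu0 i hi]), hsum]
  have hnormal : G.mulVec c = b := by
    funext i
    simp only [Matrix.mulVec, dotProduct, hb, ← hsumI, dotR_sum_right]
    congr 1; funext j
    simp [hG, gramM, hc, dotR_smul_right]; ring
  have hdet : G.det ≠ 0 := by
    intro hdet0
    obtain ⟨u, hu0, huv⟩ := Matrix.exists_mulVec_eq_zero_iff.2 hdet0
    have hcomm : ∀ a b : Fin d → ℝ, dotR a b = dotR b a := by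
      intro a b; unfold dotR; congr 1; funext k; ring
    have h1 : ∀ i : I, dotR (v i) (∑ j : I, u j • v j) = (G.mulVec u) i := by
      intro i
      simp only [dotR_sum_right, Matrix.mulVec, dotProduct]
      congr 1; funext j
      simp [hG, gramM, dotR_smul_right]; ring
    have hzero : ∑ i : I, u i • v i = 0 := by
      apply dotR_self_eq_zero
      rw [dotR_sum_right]
      apply Finset.sum_eq_zero
      intro i _
      rw [dotR_smul_right, hcomm, h1 i, huv]
      simp
    have := Fintype.linearIndependent_iff.1 hli u hzero
    exact hu0 (funext this)
  have hsolve : G.adjugate.mulVec b = G.det • c := by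
    rw [← hnormal, Matrix.mulVec_mulVec, Matrix.adjugate_mul, Matrix.smul_mulVec,
      Matrix.one_mulVec]
  funext i
  by_cases h : i ∈ I
  · simp only [selCoef, dif_pos h, hsolve, Pi.smul_apply, smul_eq_mul,
      inv_mul_cancel_left₀ hdet]
    show G.det⁻¹ * (G.adjugate.mulVec b) ⟨i, h⟩ = mu i
    rw [hsolve, Pi.smul_apply, smul_eq_mul, inv_mul_cancel_left₀ hdet]
  · simp [selCoef, dif_neg h, hmu0 i h]
local instance matrixMeasurableSpace {m n : Type*} : MeasurableSpace (Matrix m n ℝ) :=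
  inferInstanceAs (MeasurableSpace (m → n → ℝ))

local instance matrixBorelSpace {m n : Type*} [Countable m] [Countable n] :
    BorelSpace (Matrix m n ℝ) :=
  inferInstanceAs (BorelSpace (m → n → ℝ))

lemma measurable_dotR_comp {Ω : Type*} [MeasurableSpace Ω] {f g : Ω → Fin d → ℝ}
    (hf : Measurable f) (hg : Measurable g) : Measurable fun ω => dotR (f ω) (g ω) := by
  unfold dotR
  exact Finset.measurable_sum _ fun k _ =>
    ((measurable_pi_apply k).comp hf).mul ((measurable_pi_apply k).comp hg)

lemma measurable_selCoef {Ω : Type*} [MeasurableSpace Ω]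
    (X : Fin d → Ω → Fin d → ℝ) (W : Ω → Fin d → ℝ)
    (hX : ∀ i, Measurable (X i)) (hW : Measurable W) (I : Finset (Fin d)) (i : Fin d) :
    Measurable fun ω => selCoef (fun j => X j ω) (W ω) I i := by
  classical
  have hGm : Measurable fun ω => gramM (fun j => X j ω) I := by
    apply measurable_pi_lambda
    intro a
    apply measurable_pi_lambda
    intro b
    exact measurable_dotR_comp (hX a) (hX b)
  have hdet : Measurable fun ω => (gramM (fun j => X j ω) I).det :=
    (continuous_id.matrix_det.measurable).comp hGm
  have hadj : ∀ a b : I, Measurable fun ω => (gramM (fun j => X j ω) I).adjugate a b :=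
    fun a b => (Continuous.measurable ((continuous_apply b).comp
      ((continuous_apply a).comp continuous_id.matrix_adjugate))).comp hGm
  have hb : ∀ j : I, Measurable fun ω => dotR (X j ω) (W ω) :=
    fun j => measurable_dotR_comp (hX j) hW
  by_cases h : i ∈ I
  · simp only [selCoef, dif_pos h]
    have hmv : Measurable fun ω =>
        ((gramM (fun j => X j ω) I).adjugate.mulVec
          (fun j : I => dotR (X j ω) (W ω))) ⟨i, h⟩ := by
      simp only [Matrix.mulVec, dotProduct]
      exact Finset.measurable_sum _ fun j _ => (hadj ⟨i, h⟩ j).mul (hb j)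
    exact hdet.inv.mul hmv
  · simp only [selCoef, dif_neg h]
    exact measurable_const
open Classical in
noncomputable def pickF {Ω ι α : Type*} (E : ι → Set Ω) (c : ι → Ω → α) (i₀ : ι) :
    List ι → Ω → α
  | [] => c i₀
  | I :: t => fun ω => if ω ∈ E I then c I ω else pickF E c i₀ t ω

lemma pickF_measurable {Ω ι α : Type*} [MeasurableSpace Ω] [MeasurableSpace α]
    {E : ι → Set Ω} {c : ι → Ω → α} (i₀ : ι)
    (hE : ∀ I, MeasurableSet (E I)) (hc : ∀ I, Measurable (c I)) :
    ∀ l : List ι, Measurable (pickF E c i₀ l)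
  | [] => hc i₀
  | I :: t => by
    classical
    exact Measurable.ite (hE I) (hc I) (pickF_measurable i₀ hE hc t)

lemma pickF_spec {Ω ι α : Type*} {E : ι → Set Ω} {c : ι → Ω → α} (i₀ : ι) :
    ∀ (l : List ι) (ω : Ω), (∃ I ∈ l, ω ∈ E I) →
      ∃ J, ω ∈ E J ∧ pickF E c i₀ l ω = c J ω
  | [], ω, h => by simp at h
  | I :: t, ω, h => by
    by_cases hω : ω ∈ E I
    · exact ⟨I, hω, by simp [pickF, hω]⟩
    · obtain ⟨J, hJ, hJω⟩ := h
      rcases List.mem_cons.1 hJ with rfl | hJt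
      · exact absurd hJω hω
      · obtain ⟨J', h1, h2⟩ := pickF_spec i₀ t ω ⟨J, hJt, hJω⟩
        exact ⟨J', h1, by simpa [pickF, hω] using h2⟩
end


open MeasureTheory Filter Topology

lemma exists_selCoef_good {d : ℕ} (v : Fin d → Fin d → ℝ) (w : Fin d → ℝ)
    (hw : w ∈ coneSet v) :
    ∃ I : Finset (Fin d), (∀ i, 0 ≤ selCoef v w I i) ∧ ∑ i, selCoef v w I i • v i = w := by
  obtain ⟨lam0, hl0, hsum0⟩ := hw
  obtain ⟨I, mu, hli, hmu, hmu0, hmusum⟩ := caratheodory_cone v lam0 hl0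
  have hsel : selCoef v w I = mu := selCoef_eq v w I hli mu hmu0 (hmusum.trans hsum0)
  exact ⟨I, fun i => hsel ▸ hmu i, by rw [hsel]; exact hmusum.trans hsum0⟩

namespace RandomNormed

/-- Membership (as an equivalence class) in the finitely generated `L⁰`-convex cone
`cone_{L⁰}{x₁, …, x_d} = {Σᵢ λᵢ xᵢ : λᵢ ∈ L⁰₊(F)}` of `x₁, …, x_d ∈ L⁰(F,ℝᵈ)`. -/
def MemL0Cone {Ω : Type*} [MeasurableSpace Ω] (μ : Measure Ω) (d : ℕ)
    (x : Fin d → Ω → (Fin d → ℝ)) (y : Ω → (Fin d → ℝ)) : Prop :=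
  ∃ lam : Fin d → Ω → ℝ, (∀ i, AEMeasurable (lam i) μ) ∧
    (∀ i, ∀ᵐ ω ∂μ, 0 ≤ lam i ω) ∧
    ∀ᵐ ω ∂μ, y ω = ∑ i, lam i ω • x i ω

/-- **A finitely generated `L⁰`-convex cone in `L⁰(F,ℝᵈ)` is closed** in the topology of
convergence in probability. -/
theorem L0_cone_closed
    {Ω : Type*} [MeasurableSpace Ω] (μ : Measure Ω) [IsProbabilityMeasure μ] (d : ℕ)
    (x : Fin d → Ω → (Fin d → ℝ)) (hx : ∀ i, AEMeasurable (x i) μ)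
    (y : ℕ → Ω → (Fin d → ℝ)) (z : Ω → (Fin d → ℝ)) (hz : AEMeasurable z μ)
    (hy : ∀ n, MemL0Cone μ d x (y n))
    (hconv : TendstoInMeasure μ y atTop z) :
    MemL0Cone μ d x z := by
  classical
  obtain ⟨x', hx'meas, hx'ae⟩ : ∃ x' : Fin d → Ω → Fin d → ℝ,
      (∀ i, Measurable (x' i)) ∧ ∀ i, x i =ᵐ[μ] x' i :=
    ⟨fun i => (hx i).mk (x i), fun i => (hx i).measurable_mk, fun i => (hx i).ae_eq_mk⟩
  obtain ⟨z', hz'meas, hz'ae⟩ : ∃ z' : Ω → Fin d → ℝ, Measurable z' ∧ z =ᵐ[μ] z' :=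
    ⟨hz.mk z, hz.measurable_mk, hz.ae_eq_mk⟩
  obtain ⟨c, hcmeas, hcspec⟩ : ∃ c : Finset (Fin d) → Ω → Fin d → ℝ,
      (∀ I, Measurable (c I)) ∧
      ∀ I ω, c I ω = selCoef (fun j => x' j ω) (z' ω) I :=
    ⟨fun I ω => selCoef (fun j => x' j ω) (z' ω) I,
      fun I => measurable_pi_lambda _ fun i => measurable_selCoef x' z' hx'meas hz'meas I i,
      fun _ _ => rfl⟩
  obtain ⟨E, hEmeas, hEspec⟩ : ∃ E : Finset (Fin d) → Set Ω,
      (∀ I, MeasurableSet (E I)) ∧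
      ∀ I ω, ω ∈ E I ↔ ((∀ i, 0 ≤ c I ω i) ∧ ∑ i, c I ω i • x' i ω = z' ω) := by
    refine ⟨fun I => {ω | (∀ i, 0 ≤ c I ω i) ∧ ∑ i, c I ω i • x' i ω = z' ω}, ?_,
      fun I ω => Iff.rfl⟩
    intro I
    have h1 : MeasurableSet {ω | ∀ i, 0 ≤ c I ω i} := by
      have he : {ω | ∀ i, 0 ≤ c I ω i} = ⋂ i, {ω | 0 ≤ c I ω i} := by
        ext ω; simp [Set.mem_iInter]
      rw [he]
      exact MeasurableSet.iInter fun i =>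
        measurableSet_le measurable_const ((measurable_pi_apply i).comp (hcmeas I))
    have h2 : MeasurableSet {ω | ∑ i, c I ω i • x' i ω = z' ω} := by
      refine measurableSet_eq_fun ?_ hz'meas
      apply Finset.measurable_sum
      intro i _
      apply measurable_pi_lambda
      intro k
      exact ((measurable_pi_apply i).comp (hcmeas I)).mul
        ((measurable_pi_apply k).comp (hx'meas i))
    exact h1.inter h2
  obtain ⟨ns, hns, htend⟩ := hconv.exists_seq_tendsto_ae
  choose lamseq hlmeas hlnn hlsum using hy
  have haegood : ∀ᵐ ω ∂μ, ∃ I : Finset (Fin d), ω ∈ E I := by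
    have h1 : ∀ᵐ ω ∂μ, ∀ n i, 0 ≤ lamseq n i ω := by
      rw [ae_all_iff]; intro n; rw [ae_all_iff]; exact hlnn n
    have h2 : ∀ᵐ ω ∂μ, ∀ n, y n ω = ∑ i, lamseq n i ω • x i ω := ae_all_iff.2 hlsum
    have h3 : ∀ᵐ ω ∂μ, ∀ i, x i ω = x' i ω := ae_all_iff.2 fun i => hx'ae i
    filter_upwards [h1, h2, h3, hz'ae, htend] with ω hω1 hω2 hω3 hω4 hω5
    have hmem : ∀ k, y (ns k) ω ∈ coneSet (fun j => x' j ω) := by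
      intro k
      refine ⟨fun i => lamseq (ns k) i ω, fun i => hω1 _ i, ?_⟩
      rw [hω2 (ns k)]
      exact Finset.sum_congr rfl fun i _ => by rw [hω3 i]
    have hz'mem : z' ω ∈ coneSet (fun j => x' j ω) := by
      rw [← hω4]
      exact (isClosed_coneSet _).mem_of_tendsto hω5 (Eventually.of_forall hmem)
    obtain ⟨I, hI1, hI2⟩ := exists_selCoef_good (fun j => x' j ω) (z' ω) hz'mem
    refine ⟨I, (hEspec I ω).2 ⟨?_, ?_⟩⟩
    · intro i; rw [hcspec]; exact hI1 i
    · rw [hcspec]; exact hI2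
  have hFgood : ∀ᵐ ω ∂μ, ∃ J, ω ∈ E J ∧
      pickF E c ∅ (Finset.univ : Finset (Finset (Fin d))).toList ω = c J ω := by
    filter_upwards [haegood] with ω hω
    obtain ⟨I, hI⟩ := hω
    exact pickF_spec ∅ _ ω ⟨I, by simp [Finset.mem_toList], hI⟩
  have hFmeas : Measurable (pickF E c ∅ (Finset.univ : Finset (Finset (Fin d))).toList) :=
    pickF_measurable ∅ hEmeas hcmeas _
  refine ⟨fun i ω => pickF E c ∅ (Finset.univ : Finset (Finset (Fin d))).toList ω i,
    fun i => ((measurable_pi_apply i).comp hFmeas).aemeasurable, fun i => ?_, ?_⟩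
  · filter_upwards [hFgood] with ω hω
    obtain ⟨J, hJ, hFeq⟩ := hω
    rw [hFeq]
    exact ((hEspec J ω).1 hJ).1 i
  · have h3 : ∀ᵐ ω ∂μ, ∀ i, x i ω = x' i ω := ae_all_iff.2 fun i => hx'ae i
    filter_upwards [hFgood, h3, hz'ae] with ω hω hω3 hω4
    obtain ⟨J, hJ, hFeq⟩ := hω
    rw [hω4, ← ((hEspec J ω).1 hJ).2]
    refine Finset.sum_congr rfl fun i _ => ?_
    rw [hFeq, hω3 i]

end RandomNormed
end

section
/- Let E be a complete random normed module with full support over ℝ. Then there exists x₀ ∈ E with ‖x₀‖ = 1, and there exists u₀ ∈ E* with u₀(x₀) = 1 and ‖u₀‖ = 1. -/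
open MeasureTheory Filter Topology ENNReal
open scoped Classical

namespace RandomNormed

variable {Ω : Type*} [MeasurableSpace Ω] {μ : Measure Ω}

/-! `Ω →ₘ[μ] ℝ` is our model of `L⁰(F)`: equivalence classes of real random variables.
We equip it with its (pointwise a.e.) commutative ring structure. -/

noncomputable instance : NatCast (Ω →ₘ[μ] ℝ) := ⟨fun n => AEEqFun.const Ω (n : ℝ)⟩
noncomputable instance : IntCast (Ω →ₘ[μ] ℝ) := ⟨fun n => AEEqFun.const Ω (n : ℝ)⟩

theorem natCast_toGerm (n : ℕ) : ((n : Ω →ₘ[μ] ℝ)).toGerm = n := by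
  show (AEEqFun.const Ω (n:ℝ)).toGerm = _
  rw [AEEqFun.const, AEEqFun.mk_toGerm]; rfl

theorem intCast_toGerm (n : ℤ) : ((n : Ω →ₘ[μ] ℝ)).toGerm = n := by
  show (AEEqFun.const Ω (n:ℝ)).toGerm = _
  rw [AEEqFun.const, AEEqFun.mk_toGerm]; rfl

noncomputable instance : CommRing (Ω →ₘ[μ] ℝ) :=
  AEEqFun.toGerm_injective.commRing AEEqFun.toGerm AEEqFun.zero_toGerm AEEqFun.one_toGerm
    AEEqFun.add_toGerm AEEqFun.mul_toGerm AEEqFun.neg_toGerm AEEqFun.sub_toGerm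
    (fun _ _ => AEEqFun.smul_toGerm _ _) (fun _ _ => AEEqFun.smul_toGerm _ _)
    AEEqFun.pow_toGerm natCast_toGerm intCast_toGerm

/-- The Ky Fan functional `ξ ↦ ∫ (|ξ| ∧ 1) dμ`: it metrizes the `(ε,λ)`-topology, i.e. the
topology of convergence in probability, on `L⁰(F) = Ω →ₘ[μ] ℝ`. -/
noncomputable def dP (μ : Measure Ω) (ξ : Ω →ₘ[μ] ℝ) : ℝ≥0∞ :=
  ∫⁻ ω, ENNReal.ofReal (min |ξ ω| 1) ∂μ

section RN

variable {E : Type*} [AddCommGroup E] [Module (Ω →ₘ[μ] ℝ) E]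

/-- `nrm` is an `L⁰`-norm on the `L⁰(F)`-module `E`. -/
def IsRNNorm (nrm : E → Ω →ₘ[μ] ℝ) : Prop :=
  (∀ x, 0 ≤ nrm x) ∧ (∀ (ξ : Ω →ₘ[μ] ℝ) (x : E), nrm (ξ • x) = |ξ| * nrm x) ∧
    (∀ x y, nrm (x + y) ≤ nrm x + nrm y) ∧ (∀ x, nrm x = 0 → x = 0)

/-- Completeness of the random normed module `(E, nrm)` with respect to the
`(ε,λ)`-topology: every Cauchy (in probability) sequence converges in probability. -/
def IsCompleteRN (nrm : E → Ω →ₘ[μ] ℝ) : Prop :=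
  ∀ x : ℕ → E,
    (∀ ε : ℝ≥0∞, 0 < ε → ∃ N, ∀ m, N ≤ m → ∀ n, N ≤ n → dP μ (nrm (x m - x n)) < ε) →
    ∃ l : E, Tendsto (fun n => dP μ (nrm (x n - l))) atTop (nhds 0)

/-- The random normed module `(E, nrm)` has full support: on no set of positive measure
do all the norms vanish. -/
def HasFullSupport (nrm : E → Ω →ₘ[μ] ℝ) : Prop :=
  ∀ A : Set Ω, MeasurableSet A → μ A ≠ 0 → ∃ x : E, ¬ (∀ᵐ ω ∂μ, ω ∈ A → nrm x ω = 0)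

/-- An `L⁰`-linear functional is a.s. bounded (equivalently, continuous), i.e. a member of
the random conjugate space `E*`. -/
def IsBoundedLF (nrm : E → Ω →ₘ[μ] ℝ) (u : E →ₗ[Ω →ₘ[μ] ℝ] (Ω →ₘ[μ] ℝ)) : Prop :=
  ∃ ξ : Ω →ₘ[μ] ℝ, 0 ≤ ξ ∧ ∀ x, |u x| ≤ ξ * nrm x

/-- `s` is the supremum in `L̄⁰(F)` (with the a.e. order) of the set `S` of
(representatives of) extended-real-valued random variables. -/
def IsAESup (μ : Measure Ω) (S : Set (Ω → EReal)) (s : Ω → EReal) : Prop :=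
  (∀ g ∈ S, ∀ᵐ ω ∂μ, g ω ≤ s ω) ∧
    ∀ b : Ω → EReal, AEMeasurable b μ → (∀ g ∈ S, ∀ᵐ ω ∂μ, g ω ≤ b ω) →
      ∀ᵐ ω ∂μ, s ω ≤ b ω

/-- `f : E → L̄⁰(F)` (in representative form) is a proper lower semicontinuous `L⁰`-convex
function: a.e.-measurable values, nowhere `-∞`, somewhere finite, `L⁰`-convex, and with
an epigraph that is (sequentially) closed in the `(ε,λ)`-topology of `E × L⁰(F)`. -/
def IsCvxFn (nrm : E → Ω →ₘ[μ] ℝ) (f : E → Ω → EReal) : Prop :=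
  (∀ x, AEMeasurable (f x) μ) ∧
  (∀ x, ∀ᵐ ω ∂μ, ⊥ < f x ω) ∧
  (∃ x, ∀ᵐ ω ∂μ, f x ω < ⊤) ∧
  (∀ ξ : Ω →ₘ[μ] ℝ, 0 ≤ ξ → ξ ≤ 1 → ∀ x y : E,
    ∀ᵐ ω ∂μ, f (ξ • x + (1 - ξ) • y) ω ≤
      ((ξ ω : ℝ) : EReal) * f x ω + (((1 - ξ : Ω →ₘ[μ] ℝ) ω : ℝ) : EReal) * f y ω) ∧
  (∀ (x : ℕ → E) (r : ℕ → Ω →ₘ[μ] ℝ) (x₀ : E) (r₀ : Ω →ₘ[μ] ℝ),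
    (∀ n, ∀ᵐ ω ∂μ, f (x n) ω ≤ ((r n ω : ℝ) : EReal)) →
    Tendsto (fun n => dP μ (nrm (x n - x₀))) atTop (nhds 0) →
    Tendsto (fun n => dP μ (r n - r₀)) atTop (nhds 0) →
    ∀ᵐ ω ∂μ, f x₀ ω ≤ ((r₀ ω : ℝ) : EReal))

/-- The class `𝒞(E)` of proper lower semicontinuous `L⁰`-convex functions on `E`. -/
def CvxFn (nrm : E → Ω →ₘ[μ] ℝ) := {f : E → Ω → EReal // IsCvxFn nrm f}

/-- The pointwise a.e. order on functions `E → L̄⁰(F)`. -/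
def CleFn (μ : Measure Ω) (f g : E → Ω → EReal) : Prop := ∀ x : E, ∀ᵐ ω ∂μ, f x ω ≤ g x ω

/-- Pointwise a.e. equality of functions `E → L̄⁰(F)` (i.e. equality in `L̄⁰`). -/
def CeqFn (μ : Measure Ω) (f g : E → Ω → EReal) : Prop := ∀ x : E, ∀ᵐ ω ∂μ, f x ω = g x ω

/-- `T` is a stable operator on `𝒞(E)`: `T(Ĩ_A f + Ĩ_{A^c} g) = Ĩ_A T(f) + Ĩ_{A^c} T(g)`. -/
def IsStableOp (nrm : E → Ω →ₘ[μ] ℝ) (T : CvxFn nrm → CvxFn nrm) : Prop :=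
  ∀ A : Set Ω, MeasurableSet A → ∀ f g h : CvxFn nrm,
    (∀ x : E, ∀ᵐ ω ∂μ, h.1 x ω = if ω ∈ A then f.1 x ω else g.1 x ω) →
    (∀ x : E, ∀ᵐ ω ∂μ, (T h).1 x ω = if ω ∈ A then (T f).1 x ω else (T g).1 x ω)

/-- `T : 𝒞(E) → 𝒞(E)` is fully order preserving: `f ≤ g ↔ T f ≤ T g`, and `T` is onto
(up to equality in `L̄⁰`, i.e. pointwise a.e. equality). -/
def IsFullyOrderPreserving (nrm : E → Ω →ₘ[μ] ℝ)
    (T : CvxFn nrm → CvxFn nrm) : Prop :=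
  (∀ f g : CvxFn nrm, CleFn μ f.1 g.1 ↔ CleFn μ (T f).1 (T g).1) ∧
    ∀ g : CvxFn nrm, ∃ f : CvxFn nrm, CeqFn μ (T f).1 g.1

end RN

section Aux

variable {Ω : Type*} [MeasurableSpace Ω] {μ : Measure Ω}

/-! ### Basic toolkit for `L⁰ = Ω →ₘ[μ] ℝ` -/

theorem aeLe {ξ η : Ω →ₘ[μ] ℝ} (h : ∀ᵐ ω ∂μ, ξ ω ≤ η ω) : ξ ≤ η := AEEqFun.coeFn_le.mp h

theorem leAe {ξ η : Ω →ₘ[μ] ℝ} (h : ξ ≤ η) : ∀ᵐ ω ∂μ, ξ ω ≤ η ω := AEEqFun.coeFn_le.mpr h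

theorem aeEq {ξ η : Ω →ₘ[μ] ℝ} (h : ∀ᵐ ω ∂μ, ξ ω = η ω) : ξ = η := AEEqFun.ext h

/-- Lift a measurable function to `L⁰`. -/
noncomputable def ofMeas (μ : Measure Ω) (f : Ω → ℝ) (hf : Measurable f) : Ω →ₘ[μ] ℝ :=
  AEEqFun.mk f hf.aestronglyMeasurable

theorem ofMeas_coeFn (f : Ω → ℝ) (hf : Measurable f) : ⇑(ofMeas μ f hf) =ᵐ[μ] f :=
  AEEqFun.coeFn_mk f hf.aestronglyMeasurable

/-- The indicator of a measurable set, as an element of `L⁰`. -/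
noncomputable def ind (μ : Measure Ω) (A : Set Ω) (hA : MeasurableSet A) : Ω →ₘ[μ] ℝ :=
  ofMeas μ (A.indicator fun _ => (1 : ℝ)) ((measurable_indicator_const_iff 1).mpr hA)

theorem ind_coeFn {A : Set Ω} (hA : MeasurableSet A) :
    ⇑(ind μ A hA) =ᵐ[μ] A.indicator fun _ => (1 : ℝ) := ofMeas_coeFn _ _

end Aux
section Aux2

variable {Ω : Type*} [MeasurableSpace Ω] {μ : Measure Ω}

private theorem min_add_aux {a b c : ℝ} (ha : 0 ≤ a) (hb : 0 ≤ b) (hc : 0 ≤ c)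
    (h : a ≤ b + c) : min a 1 ≤ min b 1 + min c 1 := by
  rcases le_total b 1 with h1 | h1
  · rcases le_total c 1 with h2 | h2
    · rw [min_eq_left h1, min_eq_left h2]; exact (min_le_left _ _).trans h
    · rw [min_eq_right h2]
      have : min a 1 ≤ 1 := min_le_right _ _
      have : (0:ℝ) ≤ min b 1 := le_min hb zero_le_one
      linarith
  · rw [min_eq_right h1]
    have : min a 1 ≤ 1 := min_le_right _ _
    have : (0:ℝ) ≤ min c 1 := le_min hc zero_le_one
    linarith

theorem dP_congr {ξ η : Ω →ₘ[μ] ℝ} (h : ∀ᵐ ω ∂μ, ξ ω = η ω) : dP μ ξ = dP μ η :=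
  MeasureTheory.lintegral_congr_ae (h.mono fun ω hω => by simp only []; rw [hω])

theorem dP_mono {ξ η : Ω →ₘ[μ] ℝ} (h : ∀ᵐ ω ∂μ, |ξ ω| ≤ |η ω|) : dP μ ξ ≤ dP μ η :=
  MeasureTheory.lintegral_mono_ae (h.mono fun ω hω =>
    ENNReal.ofReal_le_ofReal (min_le_min hω le_rfl))

theorem dP_aemeasurable (ξ : Ω →ₘ[μ] ℝ) :
    AEMeasurable (fun ω => ENNReal.ofReal (min |ξ ω| 1)) μ := by
  have h : AEMeasurable (⇑ξ) μ := ξ.aestronglyMeasurable.aemeasurable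
  exact ENNReal.measurable_ofReal.comp_aemeasurable
    ((continuous_abs.measurable.comp_aemeasurable h).min aemeasurable_const)

theorem dP_eq_zero {ξ : Ω →ₘ[μ] ℝ} (h : dP μ ξ = 0) : ξ = 0 := by
  rw [dP, MeasureTheory.lintegral_eq_zero_iff' (dP_aemeasurable ξ)] at h
  refine aeEq ?_
  filter_upwards [h, AEEqFun.coeFn_zero (β := ℝ) (μ := μ)] with ω h0 hz
  have h0' : ENNReal.ofReal (min |ξ ω| 1) = 0 := h0
  rw [ENNReal.ofReal_eq_zero] at h0'
  have habs : |ξ ω| = 0 := by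
    have := abs_nonneg (ξ ω)
    rcases le_total (|ξ ω|) 1 with hc | hc
    · rw [min_eq_left hc] at h0'; linarith
    · rw [min_eq_right hc] at h0'; linarith
  rw [hz]; exact abs_eq_zero.mp habs

theorem dP_le_add {ξ η ζ : Ω →ₘ[μ] ℝ} (h : ∀ᵐ ω ∂μ, |ξ ω| ≤ |η ω| + |ζ ω|) :
    dP μ ξ ≤ dP μ η + dP μ ζ := by
  calc dP μ ξ ≤ ∫⁻ ω, (ENNReal.ofReal (min |η ω| 1) + ENNReal.ofReal (min |ζ ω| 1)) ∂μ := by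
        refine MeasureTheory.lintegral_mono_ae (h.mono fun ω hω => ?_)
        rw [← ENNReal.ofReal_add (le_min (abs_nonneg _) zero_le_one)
          (le_min (abs_nonneg _) zero_le_one)]
        exact ENNReal.ofReal_le_ofReal
          (min_add_aux (abs_nonneg _) (abs_nonneg _) (abs_nonneg _) hω)
    _ = dP μ η + dP μ ζ := MeasureTheory.lintegral_add_left' (dP_aemeasurable η) _

theorem dP_ind_le {A : Set Ω} (hA : MeasurableSet A) (B : Set Ω) (hAB : A ⊆ B) :
    dP μ (ind μ A hA) ≤ μ B := by
  have : dP μ (ind μ A hA) = ∫⁻ ω, A.indicator (fun _ => (1:ℝ≥0∞)) ω ∂μ := by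
    refine MeasureTheory.lintegral_congr_ae ?_
    filter_upwards [ind_coeFn hA] with ω hω
    rw [hω]
    by_cases hmem : ω ∈ A <;> simp [Set.indicator_of_mem, Set.indicator_of_notMem, hmem]
  rw [this, MeasureTheory.lintegral_indicator_const hA, one_mul]
  exact measure_mono hAB

end Aux2
section Aux3

variable {Ω : Type*} [MeasurableSpace Ω] {μ : Measure Ω}
variable {E : Type*} [AddCommGroup E] [Module (Ω →ₘ[μ] ℝ) E]

theorem ind_mul {A B : Set Ω} (hA : MeasurableSet A) (hB : MeasurableSet B) :
    ind μ A hA * ind μ B hB = ind μ (A ∩ B) (hA.inter hB) := by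
  refine aeEq ?_
  filter_upwards [AEEqFun.coeFn_mul (ind μ A hA) (ind μ B hB), ind_coeFn hA, ind_coeFn hB,
    ind_coeFn (μ := μ) (hA.inter hB)] with ω hmul ha hb hab
  rw [hmul]
  simp only [Pi.mul_apply, ha, hb, hab]
  by_cases h1 : ω ∈ A <;> by_cases h2 : ω ∈ B <;>
    simp [Set.indicator_of_mem, Set.indicator_of_notMem, h1, h2, Set.mem_inter_iff]

theorem ind_add_compl {A : Set Ω} (hA : MeasurableSet A) :
    ind μ A hA + ind μ Aᶜ hA.compl = 1 := by
  refine aeEq ?_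
  filter_upwards [AEEqFun.coeFn_add (ind μ A hA) (ind μ Aᶜ hA.compl), ind_coeFn hA,
    ind_coeFn (μ := μ) hA.compl, AEEqFun.coeFn_one (β := ℝ) (μ := μ)] with ω hadd ha hac hone
  rw [hadd]
  simp only [Pi.add_apply, ha, hac, hone, Pi.one_apply]
  by_cases h1 : ω ∈ A <;>
    simp [Set.indicator_of_mem, Set.indicator_of_notMem, h1]

theorem abs_ind {A : Set Ω} (hA : MeasurableSet A) : |ind μ A hA| = ind μ A hA := by
  refine aeEq ?_
  filter_upwards [AEEqFun.coeFn_abs (ind μ A hA), ind_coeFn (μ := μ) hA] with ω habs ha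
  rw [habs, ha]
  by_cases h1 : ω ∈ A <;>
    simp [Set.indicator_of_mem, Set.indicator_of_notMem, h1]

variable {nrm : E → Ω →ₘ[μ] ℝ}

theorem nrm_zero (hnrm : IsRNNorm nrm) : nrm (0 : E) = 0 := by
  have h := hnrm.2.1 0 0
  rw [zero_smul] at h
  rw [h]
  refine aeEq ?_
  filter_upwards [AEEqFun.coeFn_mul |(0 : Ω →ₘ[μ] ℝ)| (nrm 0),
    AEEqFun.coeFn_abs (0 : Ω →ₘ[μ] ℝ), AEEqFun.coeFn_zero (β := ℝ) (μ := μ)] with ω h1 h2 h3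
  rw [h1]
  simp only [Pi.mul_apply, h2, h3, Pi.zero_apply, abs_zero, zero_mul]

theorem nrm_neg (hnrm : IsRNNorm nrm) (x : E) : nrm (-x) = nrm x := by
  have h : ((-1 : Ω →ₘ[μ] ℝ)) • x = -x := by rw [neg_one_smul]
  rw [← h, hnrm.2.1]
  have habs : |(-1 : Ω →ₘ[μ] ℝ)| = 1 := by
    refine aeEq ?_
    filter_upwards [AEEqFun.coeFn_abs (-1 : Ω →ₘ[μ] ℝ), AEEqFun.coeFn_neg (1 : Ω →ₘ[μ] ℝ),
      AEEqFun.coeFn_one (β := ℝ) (μ := μ)] with ω h1 h2 h3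
    rw [h1, h2]
    simp [h3]
  rw [habs, one_mul]

theorem nrm_nonneg_ae (hnrm : IsRNNorm nrm) (x : E) : ∀ᵐ ω ∂μ, 0 ≤ nrm x ω := by
  filter_upwards [leAe (hnrm.1 x), AEEqFun.coeFn_zero (β := ℝ) (μ := μ)] with ω h1 h2
  rw [h2] at h1; exact h1

theorem nrm_tri_ae (hnrm : IsRNNorm nrm) (x y : E) :
    ∀ᵐ ω ∂μ, nrm (x + y) ω ≤ nrm x ω + nrm y ω := by
  filter_upwards [leAe (hnrm.2.2.1 x y), AEEqFun.coeFn_add (nrm x) (nrm y)] with ω h1 h2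
  rw [h2] at h1; exact h1

theorem abs_nrm_sub_nrm_ae (hnrm : IsRNNorm nrm) (x y : E) :
    ∀ᵐ ω ∂μ, |nrm x ω - nrm y ω| ≤ nrm (x - y) ω := by
  have h1 := nrm_tri_ae hnrm (x - y) y
  have h2 := nrm_tri_ae hnrm (y - x) x
  rw [sub_add_cancel] at h1
  rw [sub_add_cancel] at h2
  have h3 : nrm (y - x) = nrm (x - y) := by
    rw [← neg_sub x y, nrm_neg hnrm]
  rw [h3] at h2
  filter_upwards [h1, h2] with ω h1 h2
  rw [abs_le]; constructor <;> linarith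

theorem eq_zero_of_nrm_ae (hnrm : IsRNNorm nrm) {x : E} (h : ∀ᵐ ω ∂μ, nrm x ω = 0) : x = 0 := by
  refine hnrm.2.2.2 x (aeEq ?_)
  filter_upwards [h, AEEqFun.coeFn_zero (β := ℝ) (μ := μ)] with ω h1 h2
  rw [h1, h2]; rfl

theorem nrm_ind_smul (hnrm : IsRNNorm nrm) {A : Set Ω} (hA : MeasurableSet A) (x : E) :
    nrm (ind μ A hA • x) = ind μ A hA * nrm x := by
  rw [hnrm.2.1, abs_ind]

theorem nrm_partition (hnrm : IsRNNorm nrm) {A : Set Ω} (hA : MeasurableSet A) (y : E) :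
    nrm y = nrm (ind μ A hA • y) + nrm (ind μ Aᶜ hA.compl • y) := by
  rw [nrm_ind_smul hnrm, nrm_ind_smul hnrm, ← add_mul, ind_add_compl, one_mul]

end Aux3
section Aux4

variable {Ω : Type*} [MeasurableSpace Ω] {μ : Measure Ω}
variable {E : Type*} [AddCommGroup E] [Module (Ω →ₘ[μ] ℝ) E]

theorem ind_congr {A B : Set Ω} (h : A = B) (hA : MeasurableSet A) (hB : MeasurableSet B) :
    ind μ A hA = ind μ B hB := by subst h; rfl

theorem ind_empty : ind μ ∅ MeasurableSet.empty = 0 := by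
  refine aeEq ?_
  filter_upwards [ind_coeFn (μ := μ) MeasurableSet.empty,
    AEEqFun.coeFn_zero (β := ℝ) (μ := μ)] with ω h1 h2
  rw [h1, h2]; simp

theorem ind_union_diff {C B : Set Ω} (hC : MeasurableSet C) (hB : MeasurableSet B) :
    ind μ C hC + ind μ (B \ C) (hB.diff hC) = ind μ (C ∪ B) (hC.union hB) := by
  refine aeEq ?_
  filter_upwards [AEEqFun.coeFn_add (ind μ C hC) (ind μ (B \ C) (hB.diff hC)),
    ind_coeFn (μ := μ) hC, ind_coeFn (μ := μ) (hB.diff hC),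
    ind_coeFn (μ := μ) (hC.union hB)] with ω h1 h2 h3 h4
  rw [h1]
  simp only [Pi.add_apply, h2, h3, h4]
  by_cases hc : ω ∈ C <;> by_cases hb : ω ∈ B <;>
    simp [Set.indicator_of_mem, Set.indicator_of_notMem, hc, hb, Set.mem_diff, Set.mem_union]

/-- `A` is admissible: the indicator of `A` is attained as a random norm. -/
def Adm (nrm : E → Ω →ₘ[μ] ℝ) (A : Set Ω) : Prop :=
  ∃ hA : MeasurableSet A, ∃ y : E, nrm y = ind μ A hA

variable {nrm : E → Ω →ₘ[μ] ℝ}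

theorem adm_empty (hnrm : IsRNNorm nrm) : Adm nrm (∅ : Set Ω) :=
  ⟨MeasurableSet.empty, 0, by rw [nrm_zero hnrm, ind_empty]⟩

theorem adm_step (hnrm : IsRNNorm nrm) {C B : Set Ω} (hC : MeasurableSet C)
    (hB : MeasurableSet B) {z b : E} (hz : nrm z = ind μ C hC) (hb : nrm b = ind μ B hB) :
    ∃ z' : E, nrm z' = ind μ (C ∪ B) (hC.union hB) ∧
      nrm (z' - z) = ind μ (B \ C) (hB.diff hC) := by
  classical
  set d : E := ind μ (B \ C) (hB.diff hC) • b with hd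
  refine ⟨z + d, ?_, ?_⟩
  swap
  · rw [add_sub_cancel_left, hd, nrm_ind_smul hnrm, hb, ind_mul,
      ind_congr (Set.inter_eq_left.mpr Set.diff_subset)]
  · -- main computation
    have hCz : ind μ C hC • (z + d) = ind μ C hC • z := by
      rw [smul_add, hd, smul_smul, ind_mul,
        ind_congr (by simp [Set.inter_diff_self] : C ∩ (B \ C) = ∅) _ MeasurableSet.empty,
        ind_empty, zero_smul, add_zero]
    have hCcz : ind μ Cᶜ hC.compl • (z + d) = d := by
      have h1 : nrm (ind μ Cᶜ hC.compl • z) = 0 := by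
        rw [nrm_ind_smul hnrm, hz, ind_mul,
          ind_congr (by simp : Cᶜ ∩ C = ∅) _ MeasurableSet.empty, ind_empty]
      have h2 : ind μ Cᶜ hC.compl • z = 0 := hnrm.2.2.2 _ h1
      rw [smul_add, h2, zero_add, hd, smul_smul, ind_mul,
        ind_congr (Set.inter_eq_right.mpr fun ω hω => hω.2)]
  
    rw [nrm_partition hnrm hC (z + d), hCz, hCcz, nrm_ind_smul hnrm, hz, ind_mul,
      ind_congr (Set.inter_self C) _ hC, hd, nrm_ind_smul hnrm, hb, ind_mul,
      ind_congr (Set.inter_eq_left.mpr Set.diff_subset) _ (hB.diff hC),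
      ind_union_diff hC hB]

theorem adm_union (hnrm : IsRNNorm nrm) {A B : Set Ω} (hA : Adm nrm A) (hB : Adm nrm B) :
    Adm nrm (A ∪ B) := by
  obtain ⟨hA, a, ha⟩ := hA
  obtain ⟨hB, b, hb⟩ := hB
  obtain ⟨z', hz', -⟩ := adm_step hnrm hA hB ha hb
  exact ⟨hA.union hB, z', hz'⟩

end Aux4
section Aux5

variable {Ω : Type*} [MeasurableSpace Ω] {μ : Measure Ω}
variable {E : Type*} [AddCommGroup E] [Module (Ω →ₘ[μ] ℝ) E]
variable {nrm : E → Ω →ₘ[μ] ℝ}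

theorem adm_subset_pos (hnrm : IsRNNorm nrm) (hfull : HasFullSupport nrm)
    {A : Set Ω} (hA : MeasurableSet A) (hμA : μ A ≠ 0) :
    ∃ B : Set Ω, B ⊆ A ∧ Adm nrm B ∧ μ B ≠ 0 := by
  classical
  obtain ⟨x, hx⟩ := hfull A hA hμA
  -- measurable representative of `nrm x`
  have hmeas : AEMeasurable (⇑(nrm x)) μ := (nrm x).aestronglyMeasurable.aemeasurable
  set g : Ω → ℝ := hmeas.mk _ with hgdef
  have hg : Measurable g := hmeas.measurable_mk
  have hge : ⇑(nrm x) =ᵐ[μ] g := hmeas.ae_eq_mk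
  -- find a level set of positive measure
  have hpos : ∃ n : ℕ, μ (A ∩ {ω | 1 / (n + 1) < g ω}) ≠ 0 := by
    by_contra hcon
    push_neg at hcon
    apply hx
    have hnull : μ (⋃ n : ℕ, A ∩ {ω | 1 / ((n : ℝ) + 1) < g ω}) = 0 :=
      measure_iUnion_null fun n => hcon n
    have := measure_eq_zero_iff_ae_notMem.mp hnull
    filter_upwards [this, hge, nrm_nonneg_ae hnrm x] with ω hω hgeω hnn hωA
    by_contra hne
    have hgt : 0 < g ω := by rw [← hgeω]; cases' hnn.lt_or_eq with h h; exact h; exact absurd h.symm hne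
    obtain ⟨n, hn⟩ := exists_nat_one_div_lt hgt
    exact hω (Set.mem_iUnion.mpr ⟨n, hωA, hn⟩)
  obtain ⟨n, hn⟩ := hpos
  set B : Set Ω := A ∩ {ω | 1 / ((n : ℝ) + 1) < g ω} with hBdef
  have hBmeas : MeasurableSet B := hA.inter (measurableSet_lt measurable_const hg)
  refine ⟨B, Set.inter_subset_left, ⟨hBmeas, ?_⟩, hn⟩
  -- scale x to have norm the indicator of B
  set ξ : Ω →ₘ[μ] ℝ := ofMeas μ (B.indicator fun ω => (g ω)⁻¹)
    ((hg.inv).indicator hBmeas) with hξdef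
  refine ⟨ξ • x, ?_⟩
  rw [hnrm.2.1]
  refine aeEq ?_
  filter_upwards [AEEqFun.coeFn_mul |ξ| (nrm x), AEEqFun.coeFn_abs ξ,
    ofMeas_coeFn (μ := μ) (B.indicator fun ω => (g ω)⁻¹) ((hg.inv).indicator hBmeas),
    hge, ind_coeFn (μ := μ) hBmeas] with ω h1 h2 h3 h4 h5
  rw [h1]
  rw [← hξdef] at h3
  simp only [Pi.mul_apply, h2, h3, h5]
  by_cases hmem : ω ∈ B
  · have hgpos : 0 < g ω := lt_trans (by positivity) hmem.2
    rw [Set.indicator_of_mem hmem, Set.indicator_of_mem hmem, h4,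
      abs_of_nonneg (inv_nonneg.mpr hgpos.le), inv_mul_cancel₀ hgpos.ne']
  · rw [Set.indicator_of_notMem hmem, Set.indicator_of_notMem hmem, abs_zero, zero_mul]

end Aux5
section AuxInd

variable {Ω : Type*}

theorem indicator_tri {s t u : Set Ω} (hst : s ⊆ t) (htu : t ⊆ u) (ω : Ω) :
    (u \ t).indicator (fun _ => (1:ℝ)) ω + (t \ s).indicator (fun _ => (1:ℝ)) ω ≤
      (u \ s).indicator (fun _ => (1:ℝ)) ω := by
  classical
  by_cases h1 : ω ∈ s
  · have h2 : ω ∈ t := hst h1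
    have h3 : ω ∈ u := htu h2
    simp [Set.indicator_apply, Set.mem_diff, h1, h2, h3]
  · by_cases h2 : ω ∈ t
    · have h3 : ω ∈ u := htu h2
      simp [Set.indicator_apply, Set.mem_diff, h1, h2, h3]
    · by_cases h3 : ω ∈ u
      · simp [Set.indicator_apply, Set.mem_diff, h1, h2, h3]
      · simp [Set.indicator_apply, Set.mem_diff, h1, h2, h3]

theorem indicator_abs_sub {s u : Set Ω} (hsu : s ⊆ u) (ω : Ω) :
    |s.indicator (fun _ => (1:ℝ)) ω - u.indicator (fun _ => (1:ℝ)) ω| ≤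
      (u \ s).indicator (fun _ => (1:ℝ)) ω := by
  classical
  by_cases h1 : ω ∈ s
  · have h2 : ω ∈ u := hsu h1
    simp [Set.indicator_apply, Set.mem_diff, h1, h2]
  · by_cases h2 : ω ∈ u
    · simp [Set.indicator_apply, Set.mem_diff, h1, h2]
    · simp [Set.indicator_apply, Set.mem_diff, h1, h2]

end AuxInd

section Aux6

variable {Ω : Type*} [MeasurableSpace Ω] {μ : Measure Ω}
variable {E : Type*} [AddCommGroup E] [Module (Ω →ₘ[μ] ℝ) E]
variable {nrm : E → Ω →ₘ[μ] ℝ}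

theorem exists_nrm_one [IsProbabilityMeasure μ] (hnrm : IsRNNorm nrm)
    (hcomplete : IsCompleteRN nrm) (hfull : HasFullSupport nrm) :
    ∃ x₀ : E, nrm x₀ = 1 := by
  classical
  -- the supremum of measures of admissible sets
  set t : ℝ≥0∞ := ⨆ p : {B : Set Ω // Adm nrm B}, μ p.1 with ht_def
  have ht_le : ∀ {B : Set Ω}, Adm nrm B → μ B ≤ t := fun {B} hB =>
    le_iSup (fun p : {B : Set Ω // Adm nrm B} => μ p.1) ⟨B, hB⟩
  have ht_one : t ≤ 1 := iSup_le fun p => prob_le_one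
  have ht_top : t ≠ ⊤ := (ht_one.trans_lt ENNReal.one_lt_top).ne
  -- choose near-optimal admissible sets
  have hA : ∀ n : ℕ, ∃ B : Set Ω, Adm nrm B ∧ t ≤ μ B + ((n : ℝ≥0∞) + 1)⁻¹ := by
    intro n
    by_cases h : t ≤ ((n : ℝ≥0∞) + 1)⁻¹
    · exact ⟨∅, adm_empty hnrm, h.trans le_add_self⟩
    · push_neg at h
      have htne : t ≠ 0 := fun h0 => by simp [h0] at h
      have hlt : t - ((n : ℝ≥0∞) + 1)⁻¹ < t :=
        ENNReal.sub_lt_self ht_top htne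
          (ENNReal.inv_ne_zero.mpr (by simp : ((n : ℝ≥0∞) + 1) ≠ ⊤))
      rw [ht_def, lt_iSup_iff] at hlt
      obtain ⟨p, hp⟩ := hlt
      exact ⟨p.1, p.2, tsub_le_iff_right.mp hp.le⟩
  choose A hAdm hAt using hA
  -- increasing sequence of admissible sets
  let D : ℕ → Set Ω := fun n => Nat.rec (A 0) (fun n Dn => Dn ∪ A (n + 1)) n
  have hD_succ : ∀ n, D (n + 1) = D n ∪ A (n + 1) := fun n => rfl
  have hDadm : ∀ n, Adm nrm (D n) := by
    intro n
    induction n with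
    | zero => exact hAdm 0
    | succ n ih => exact adm_union hnrm ih (hAdm (n + 1))
  have hDm : ∀ n, MeasurableSet (D n) := fun n => (hDadm n).1
  have hDmono : Monotone D := monotone_nat_of_le_succ fun n => Set.subset_union_left
  have hADn : ∀ n, A n ⊆ D n := by
    intro n
    cases n with
    | zero => exact subset_rfl
    | succ n => exact Set.subset_union_right
  have hDt : ∀ n, t ≤ μ (D n) + ((n : ℝ≥0∞) + 1)⁻¹ := fun n =>
    (hAt n).trans (add_le_add (measure_mono (hADn n)) le_rfl)
  -- coherent sequence of witnesses
  have hrec : ∀ n (z : E), nrm z = ind μ (D n) (hDm n) →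
      ∃ z' : E, nrm z' = ind μ (D (n + 1)) (hDm (n + 1)) ∧
        nrm (z' - z) = ind μ (D (n + 1) \ D n) ((hDm (n + 1)).diff (hDm n)) := by
    intro n z hz
    obtain ⟨hAm, b, hb⟩ := hAdm (n + 1)
    obtain ⟨z', h1, h2⟩ := adm_step hnrm (hDm n) hAm hz hb
    refine ⟨z', h1.trans (ind_congr (hD_succ n).symm _ _), h2.trans (ind_congr ?_ _ _)⟩
    rw [hD_succ n, Set.union_diff_left]
  choose F hF1 hF2 using hrec
  obtain ⟨hA0m, z0, hz0⟩ := hAdm 0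
  have hz0' : nrm z0 = ind μ (D 0) (hDm 0) := hz0.trans (ind_congr rfl _ _)
  let g : ∀ n : ℕ, {z : E // nrm z = ind μ (D n) (hDm n)} := fun n =>
    Nat.rec ⟨z0, hz0'⟩ (fun n p => ⟨F n p.1 p.2, hF1 n p.1 p.2⟩) n
  set z : ℕ → E := fun n => (g n).1 with hzdef
  have hznrm : ∀ n, nrm (z n) = ind μ (D n) (hDm n) := fun n => (g n).2
  have hzdiff : ∀ n, nrm (z (n + 1) - z n) =
      ind μ (D (n + 1) \ D n) ((hDm (n + 1)).diff (hDm n)) := fun n => hF2 n (g n).1 (g n).2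
  -- telescoping estimate
  have htel : ∀ n m, n ≤ m → ∀ᵐ ω ∂μ,
      nrm (z m - z n) ω ≤ (D m \ D n).indicator (fun _ => (1:ℝ)) ω := by
    intro n m hnm
    induction m, hnm using Nat.le_induction with
    | base =>
      rw [sub_self, nrm_zero hnrm]
      filter_upwards [AEEqFun.coeFn_zero (β := ℝ) (μ := μ)] with ω h0
      rw [h0]
      simp only [Pi.zero_apply]
      exact Set.indicator_apply_nonneg fun _ => zero_le_one
    | succ m hm ih =>
      have hsplit : z (m + 1) - z n = (z (m + 1) - z m) + (z m - z n) := by abel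
      have htri := nrm_tri_ae hnrm (z (m + 1) - z m) (z m - z n)
      rw [← hsplit] at htri
      have h3' : ⇑(nrm (z (m+1) - z m)) =ᵐ[μ] (D (m+1) \ D m).indicator fun _ => (1:ℝ) := by
        rw [hzdiff m]; exact ind_coeFn _
      filter_upwards [htri, ih, h3'] with ω h1 h2 h3
      refine h1.trans ?_
      rw [h3]
      have := indicator_tri (hDmono hm) (hDmono (Nat.le_succ m)) ω
      linarith
  -- Cauchy estimate
  have hest : ∀ n m, n ≤ m → dP μ (nrm (z m - z n)) ≤ ((n : ℝ≥0∞) + 1)⁻¹ := by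
    intro n m hnm
    have h1 : dP μ (nrm (z m - z n)) ≤ μ (D m \ D n) := by
      have hmono : ∀ᵐ ω ∂μ, |(nrm (z m - z n)) ω| ≤
          |(ind μ (D m \ D n) ((hDm m).diff (hDm n))) ω| := by
        filter_upwards [htel n m hnm, nrm_nonneg_ae hnrm (z m - z n),
          ind_coeFn (μ := μ) ((hDm m).diff (hDm n))] with ω h1 h2 h3
        rw [abs_of_nonneg h2, h3]
        refine h1.trans (le_abs_self _)
      exact (dP_mono hmono).trans (dP_ind_le _ _ subset_rfl)
    refine h1.trans ?_
    have hdiff : μ (D m \ D n) = μ (D m) - μ (D n) :=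
      measure_diff (hDmono hnm) (hDm n).nullMeasurableSet (measure_ne_top μ _)
    rw [hdiff]
    refine tsub_le_iff_right.mpr ?_
    calc μ (D m) ≤ t := ht_le (hDadm m)
      _ ≤ μ (D n) + ((n : ℝ≥0∞) + 1)⁻¹ := hDt n
      _ = ((n : ℝ≥0∞) + 1)⁻¹ + μ (D n) := add_comm _ _
  have hsymm : ∀ n m, nrm (z m - z n) = nrm (z n - z m) := by
    intro n m
    rw [← neg_sub (z n) (z m), nrm_neg hnrm]
  have hcauchy : ∀ ε : ℝ≥0∞, 0 < ε → ∃ N, ∀ m, N ≤ m → ∀ n, N ≤ n →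
      dP μ (nrm (z m - z n)) < ε := by
    intro ε hε
    obtain ⟨k, hk⟩ := ENNReal.exists_inv_nat_lt hε.ne'
    refine ⟨k, fun m hm n hn => ?_⟩
    have key : ∀ a b : ℕ, k ≤ a → a ≤ b → dP μ (nrm (z b - z a)) < ε := by
      intro a b ha hab
      refine lt_of_le_of_lt ((hest a b hab).trans ?_) hk
      rw [ENNReal.inv_le_inv]
      exact le_trans (by exact_mod_cast ha) le_self_add
    rcases le_total n m with h | h
    · exact key n m hn h
    · rw [hsymm n m]
      exact key m n hm h
  obtain ⟨l, hl⟩ := hcomplete z hcauchy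
  -- identification of the limit norm
  set Cinf : Set Ω := ⋃ n, D n with hCinf_def
  have hCm : MeasurableSet Cinf := MeasurableSet.iUnion hDm
  have hsubC : ∀ n, D n ⊆ Cinf := fun n => Set.subset_iUnion D n
  have hmeasC : Tendsto (fun n => μ (Cinf \ D n)) atTop (nhds 0) := by
    have h0 : ⋂ n, (Cinf \ D n) = ∅ := by
      ext ω
      simp only [Set.mem_iInter, Set.mem_diff, Set.mem_empty_iff_false, iff_false, not_forall]
      by_cases hω : ω ∈ Cinf
      · obtain ⟨n, hn⟩ := Set.mem_iUnion.mp hω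
        exact ⟨n, fun hc => hc.2 hn⟩
      · exact ⟨0, fun hc => hω hc.1⟩
    have := MeasureTheory.tendsto_measure_iInter_atTop
      (fun n => (hCm.diff (hDm n)).nullMeasurableSet)
      (fun a b hab => Set.diff_subset_diff_right (hDmono hab))
      ⟨0, measure_ne_top μ _⟩
    rw [h0] at this
    simpa [Function.comp_def] using this
  have hkey : nrm l = ind μ Cinf hCm := by
    have hbound : ∀ n, dP μ (nrm l - ind μ Cinf hCm) ≤
        dP μ (nrm (z n - l)) + μ (Cinf \ D n) := by
      intro n
      have h2 : dP μ (nrm l - ind μ Cinf hCm) ≤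
          dP μ (nrm (z n - l)) + dP μ (ind μ (Cinf \ D n) (hCm.diff (hDm n))) := by
        refine dP_le_add ?_
        have hzn : ⇑(nrm (z n)) =ᵐ[μ] (D n).indicator fun _ => (1:ℝ) := by
          rw [hznrm n]; exact ind_coeFn _
        filter_upwards [AEEqFun.coeFn_sub (nrm l) (ind μ Cinf hCm),
          abs_nrm_sub_nrm_ae hnrm (z n) l, hzn, ind_coeFn (μ := μ) hCm,
          ind_coeFn (μ := μ) (hCm.diff (hDm n)), nrm_nonneg_ae hnrm (z n - l)] with
          ω h1 h2 h3 h4 h5 h6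
        rw [h1, Pi.sub_apply, h4, h5]
        have : |nrm l ω - Cinf.indicator (fun _ => (1:ℝ)) ω| ≤
            |nrm l ω - nrm (z n) ω| + |nrm (z n) ω - Cinf.indicator (fun _ => (1:ℝ)) ω| :=
          abs_sub_le _ _ _
        refine this.trans (add_le_add ?_ ?_)
        · rw [abs_sub_comm]
          exact h2.trans (le_abs_self _)
        · rw [h3]
          exact (indicator_abs_sub (hsubC n) ω).trans (le_abs_self _)
      exact h2.trans (add_le_add_right (dP_ind_le _ _ subset_rfl) _)
    have h0 : dP μ (nrm l - ind μ Cinf hCm) ≤ 0 := by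
      have htend : Tendsto (fun n => dP μ (nrm (z n - l)) + μ (Cinf \ D n)) atTop (nhds 0) := by
        have := Tendsto.add hl hmeasC
        simpa using this
      exact ge_of_tendsto' htend hbound
    have := dP_eq_zero (le_antisymm h0 zero_le)
    rwa [sub_eq_zero] at this
  -- the union has full measure
  have hCfull : μ Cinfᶜ = 0 := by
    by_contra hc
    obtain ⟨B, hBsub, hBadm, hBpos⟩ := adm_subset_pos hnrm hfull hCm.compl hc
    have hCadm : Adm nrm Cinf := ⟨hCm, l, hkey⟩
    have hUadm : Adm nrm (Cinf ∪ B) := adm_union hnrm hCadm hBadm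
    have hdisj : Disjoint Cinf B := Set.disjoint_right.mpr fun ω hω => hBsub hω
    have hUmeas : μ (Cinf ∪ B) = μ Cinf + μ B :=
      measure_union hdisj hBadm.1
    have htC : t ≤ μ Cinf := by
      refine ENNReal.le_of_forall_pos_le_add fun ε hε hfin => ?_
      obtain ⟨k, hk⟩ := ENNReal.exists_inv_nat_lt
        (show (ε : ℝ≥0∞) ≠ 0 by exact_mod_cast hε.ne')
      calc t ≤ μ (D (k + 1)) + ((k : ℝ≥0∞) + 1 + 1)⁻¹ := by exact_mod_cast hDt (k + 1)
        _ ≤ μ Cinf + ε := by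
            refine add_le_add (measure_mono (hsubC (k+1))) ?_
            refine le_trans ?_ hk.le
            rw [ENNReal.inv_le_inv]
            calc (k:ℝ≥0∞) ≤ (k:ℝ≥0∞) + (1 + 1) := le_self_add
              _ = (k:ℝ≥0∞) + 1 + 1 := by rw [add_assoc]
    have hsum : μ Cinf + μ B ≤ μ Cinf + 0 := by
      rw [add_zero]
      exact (hUmeas ▸ ht_le hUadm).trans htC
    have hB0 : μ B ≤ 0 := by
      exact (ENNReal.add_le_add_iff_left (measure_ne_top μ Cinf)).mp hsum
    exact hBpos (le_antisymm hB0 zero_le)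
  refine ⟨l, hkey.trans ?_⟩
  refine aeEq ?_
  have hae : ∀ᵐ ω ∂μ, ω ∈ Cinf := by
    have := measure_eq_zero_iff_ae_notMem.mp hCfull
    filter_upwards [this] with ω hω
    simpa using hω
  filter_upwards [ind_coeFn (μ := μ) hCm, AEEqFun.coeFn_one (β := ℝ) (μ := μ), hae]
    with ω h1 h2 h3
  rw [h1, h2, Set.indicator_of_mem h3, Pi.one_apply]

end Aux6
section Aux7

variable {Ω : Type*} [MeasurableSpace Ω] {μ : Measure Ω}

theorem integrable_arctan [IsFiniteMeasure μ] (f : Ω → ℝ) (hf : AEStronglyMeasurable f μ) :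
    MeasureTheory.Integrable (fun ω => Real.arctan (f ω)) μ := by
  refine MeasureTheory.Integrable.mono' (MeasureTheory.integrable_const (Real.pi / 2))
    (Real.continuous_arctan.comp_aestronglyMeasurable hf) ?_
  filter_upwards with ω
  rw [Real.norm_eq_abs, abs_le]
  exact ⟨(Real.neg_pi_div_two_lt_arctan _).le, (Real.arctan_lt_pi_div_two _).le⟩

/-- Existence of least upper bounds in `L⁰` for upward-directed, bounded families. -/
theorem exists_aesup [IsProbabilityMeasure μ] (S : Set (Ω →ₘ[μ] ℝ)) (hne : S.Nonempty)
    (hdir : ∀ a ∈ S, ∀ b ∈ S, ∃ c ∈ S, a ≤ c ∧ b ≤ c)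
    (β : Ω →ₘ[μ] ℝ) (hβ : ∀ a ∈ S, a ≤ β) :
    ∃ s : Ω →ₘ[μ] ℝ, (∀ a ∈ S, a ≤ s) ∧ ∀ b : Ω →ₘ[μ] ℝ, (∀ a ∈ S, a ≤ b) → s ≤ b := by
  classical
  set I : (Ω →ₘ[μ] ℝ) → ℝ := fun ξ => ∫ ω, Real.arctan (ξ ω) ∂μ with hI_def
  have hint : ∀ ξ : Ω →ₘ[μ] ℝ, MeasureTheory.Integrable (fun ω => Real.arctan (ξ ω)) μ :=
    fun ξ => integrable_arctan _ ξ.aestronglyMeasurable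
  have hImono : ∀ {a b : Ω →ₘ[μ] ℝ}, a ≤ b → I a ≤ I b := by
    intro a b hab
    refine MeasureTheory.integral_mono_ae (hint a) (hint b) ?_
    filter_upwards [leAe hab] with ω hω
    exact Real.arctan_strictMono.monotone hω
  set t : ℝ := sSup (I '' S) with ht_def
  have hbdd : BddAbove (I '' S) := by
    refine ⟨I β, ?_⟩
    rintro _ ⟨a, ha, rfl⟩
    exact hImono (hβ a ha)
  have han : ∀ n : ℕ, ∃ a ∈ S, t - 1 / (n + 1) < I a := by
    intro n
    have hlt0 : t - 1 / ((n : ℝ) + 1) < sSup (I '' S) := by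
      rw [← ht_def]
      exact sub_lt_self t (by positivity)
    obtain ⟨_, ⟨a, ha, rfl⟩, hlt⟩ := exists_lt_of_lt_csSup (hne.image I) hlt0
    exact ⟨a, ha, hlt⟩
  choose a haS haI using han
  have hstep : ∀ (p : {x : Ω →ₘ[μ] ℝ // x ∈ S}) (n : ℕ),
      ∃ q : {x : Ω →ₘ[μ] ℝ // x ∈ S}, p.1 ≤ q.1 ∧ a (n + 1) ≤ q.1 := by
    intro p n
    obtain ⟨c, hcS, h1, h2⟩ := hdir p.1 p.2 (a (n + 1)) (haS (n + 1))
    exact ⟨⟨c, hcS⟩, h1, h2⟩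
  choose G hG1 hG2 using hstep
  let bb : ℕ → {x : Ω →ₘ[μ] ℝ // x ∈ S} := fun n =>
    Nat.rec ⟨a 0, haS 0⟩ (fun n p => G p n) n
  set b : ℕ → Ω →ₘ[μ] ℝ := fun n => (bb n).1 with hb_def
  have hbS : ∀ n, b n ∈ S := fun n => (bb n).2
  have hbsucc : ∀ n, b n ≤ b (n + 1) := fun n => hG1 (bb n) n
  have hbmono : Monotone b := monotone_nat_of_le_succ hbsucc
  have hba : ∀ n, a n ≤ b n := by
    intro n
    cases n with
    | zero => exact le_rfl
    | succ n => exact hG2 (bb n) n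
  have hbt : ∀ n, t - 1 / (n + 1) < I (b n) := fun n => (haI n).trans_le (hImono (hba n))
  have hbtle : ∀ n, I (b n) ≤ t := fun n => le_csSup hbdd ⟨b n, hbS n, rfl⟩
  -- the pointwise supremum
  set s0 : Ω → ℝ := fun ω => ⨆ n, (b n) ω with hs0_def
  have hs0meas : AEMeasurable s0 μ :=
    AEMeasurable.iSup fun n => (b n).aestronglyMeasurable.aemeasurable
  set s : Ω →ₘ[μ] ℝ := AEEqFun.mk s0 hs0meas.aestronglyMeasurable with hs_def
  have hscoe : ⇑s =ᵐ[μ] s0 := AEEqFun.coeFn_mk _ _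
  have hmono_ae : ∀ᵐ ω ∂μ, ∀ n, (b n) ω ≤ (b (n + 1)) ω :=
    MeasureTheory.ae_all_iff.mpr fun n => leAe (hbsucc n)
  have hbd_ae : ∀ᵐ ω ∂μ, ∀ n, (b n) ω ≤ β ω :=
    MeasureTheory.ae_all_iff.mpr fun n => leAe (hβ _ (hbS n))
  have hbdd_ae : ∀ᵐ ω ∂μ, BddAbove (Set.range fun n => (b n) ω) := by
    filter_upwards [hbd_ae] with ω hω
    exact ⟨β ω, by rintro _ ⟨n, rfl⟩; exact hω n⟩
  have htend_ae : ∀ᵐ ω ∂μ, Tendsto (fun n => (b n) ω) atTop (nhds (s0 ω)) := by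
    filter_upwards [hmono_ae, hbdd_ae] with ω h1 h2
    exact tendsto_atTop_ciSup (monotone_nat_of_le_succ h1) h2
  have hle_s0 : ∀ᵐ ω ∂μ, ∀ n, (b n) ω ≤ s0 ω := by
    filter_upwards [hbdd_ae] with ω h2 n
    exact le_ciSup h2 n
  -- `I (b n)` converges to `∫ arctan ∘ s0` and to `t`
  have hIb_tendsto : Tendsto (fun n => I (b n)) atTop (nhds (∫ ω, Real.arctan (s0 ω) ∂μ)) := by
    refine MeasureTheory.tendsto_integral_of_dominated_convergence
      (fun _ => Real.pi / 2)
      (fun n => Real.continuous_arctan.comp_aestronglyMeasurable (b n).aestronglyMeasurable)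
      (MeasureTheory.integrable_const _) (fun n => ?_) ?_
    · filter_upwards with ω
      rw [Real.norm_eq_abs, abs_le]
      exact ⟨(Real.neg_pi_div_two_lt_arctan _).le, (Real.arctan_lt_pi_div_two _).le⟩
    · filter_upwards [htend_ae] with ω hω
      exact (Real.continuous_arctan.tendsto _).comp hω
  have hIb_t : Tendsto (fun n => I (b n)) atTop (nhds t) := by
    have h1 : Tendsto (fun n : ℕ => t - 1 / ((n : ℝ) + 1)) atTop (nhds t) := by
      have := tendsto_one_div_add_atTop_nhds_zero_nat (𝕜 := ℝ)
      have h2 := Tendsto.sub (tendsto_const_nhds (x := t)) this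
      simpa using h2
    exact tendsto_of_tendsto_of_tendsto_of_le_of_le h1 tendsto_const_nhds
      (fun n => (hbt n).le) hbtle
  have hIs : (∫ ω, Real.arctan (s0 ω) ∂μ) = t := tendsto_nhds_unique hIb_tendsto hIb_t
  refine ⟨s, ?_, ?_⟩
  · -- s is an upper bound
    intro x hx
    have hstep2 : ∀ n : ℕ, ∃ c ∈ S, b n ≤ c ∧ x ≤ c := fun n => hdir (b n) (hbS n) x hx
    choose c hcS hcb hcx using hstep2
    have hsuple : ∀ n, I (b n ⊔ x) ≤ t := fun n =>
      (hImono (sup_le (hcb n) (hcx n))).trans (le_csSup hbdd ⟨c n, hcS n, rfl⟩)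
    have hsup_coe : ∀ᵐ ω ∂μ, ∀ n, (b n ⊔ x) ω = (b n) ω ⊔ x ω :=
      MeasureTheory.ae_all_iff.mpr fun n => AEEqFun.coeFn_sup (b n) x
    have hxm : AEMeasurable (fun ω => s0 ω ⊔ x ω) μ :=
      hs0meas.sup x.aestronglyMeasurable.aemeasurable
    have htendsup : Tendsto (fun n => I (b n ⊔ x)) atTop
        (nhds (∫ ω, Real.arctan (s0 ω ⊔ x ω) ∂μ)) := by
      refine MeasureTheory.tendsto_integral_of_dominated_convergence
        (fun _ => Real.pi / 2)
        (fun n => Real.continuous_arctan.comp_aestronglyMeasurable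
          (b n ⊔ x).aestronglyMeasurable)
        (MeasureTheory.integrable_const _) (fun n => ?_) ?_
      · filter_upwards with ω
        rw [Real.norm_eq_abs, abs_le]
        exact ⟨(Real.neg_pi_div_two_lt_arctan _).le, (Real.arctan_lt_pi_div_two _).le⟩
      · filter_upwards [htend_ae, hsup_coe] with ω h1 h2
        have htend2 : Tendsto (fun n => (b n ⊔ x) ω) atTop (nhds (s0 ω ⊔ x ω)) := by
          have h3 := h1.max (tendsto_const_nhds (x := x ω))
          exact Tendsto.congr (fun n => (h2 n).symm) h3
        exact (Real.continuous_arctan.tendsto _).comp htend2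
    have hlim_le : (∫ ω, Real.arctan (s0 ω ⊔ x ω) ∂μ) ≤ t := le_of_tendsto' htendsup hsuple
    have hint1 : MeasureTheory.Integrable (fun ω => Real.arctan (s0 ω ⊔ x ω)) μ :=
      integrable_arctan _ hxm.aestronglyMeasurable
    have hint2 : MeasureTheory.Integrable (fun ω => Real.arctan (s0 ω)) μ :=
      integrable_arctan _ hs0meas.aestronglyMeasurable
    have hnn : 0 ≤ᵐ[μ] fun ω => Real.arctan (s0 ω ⊔ x ω) - Real.arctan (s0 ω) := by
      filter_upwards with ω
      simp only [Pi.zero_apply, sub_nonneg]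
      exact Real.arctan_strictMono.monotone le_sup_left
    have hzero : (∫ ω, (Real.arctan (s0 ω ⊔ x ω) - Real.arctan (s0 ω)) ∂μ) = 0 := by
      rw [MeasureTheory.integral_sub hint1 hint2, hIs]
      have h1 := MeasureTheory.integral_nonneg_of_ae hnn
      rw [MeasureTheory.integral_sub hint1 hint2, hIs] at h1
      linarith
    have haez := (MeasureTheory.integral_eq_zero_iff_of_nonneg_ae hnn
      (hint1.sub hint2)).mp hzero
    refine aeLe ?_
    filter_upwards [haez, hscoe] with ω h1 h2
    rw [h2]
    have h3 : Real.arctan (s0 ω ⊔ x ω) = Real.arctan (s0 ω) := by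
      have : Real.arctan (s0 ω ⊔ x ω) - Real.arctan (s0 ω) = 0 := h1
      linarith
    exact sup_eq_left.mp (Real.arctan_injective h3)
  · -- s is the least upper bound
    intro c hc
    have hc_ae : ∀ᵐ ω ∂μ, ∀ n, (b n) ω ≤ c ω :=
      MeasureTheory.ae_all_iff.mpr fun n => leAe (hc _ (hbS n))
    refine aeLe ?_
    filter_upwards [hscoe, hc_ae] with ω h1 h2
    rw [h1]
    exact ciSup_le h2

end Aux7
section Aux8

variable {Ω : Type*} [MeasurableSpace Ω] {μ : Measure Ω}
variable {E : Type*} [AddCommGroup E] [Module (Ω →ₘ[μ] ℝ) E]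
variable {nrm : E → Ω →ₘ[μ] ℝ}

theorem abs_le_ae {a b : Ω →ₘ[μ] ℝ} (h : |a| ≤ b) : ∀ᵐ ω ∂μ, |a ω| ≤ b ω := by
  filter_upwards [leAe h, AEEqFun.coeFn_abs a] with ω h1 h2
  rw [← h2]; exact h1

theorem ae_abs_le {a b : Ω →ₘ[μ] ℝ} (h : ∀ᵐ ω ∂μ, |a ω| ≤ b ω) : |a| ≤ b := by
  refine aeLe ?_
  filter_upwards [h, AEEqFun.coeFn_abs a] with ω h1 h2
  rw [h2]; exact h1

theorem eq_zero_of_abs_ae {a : Ω →ₘ[μ] ℝ} (h : ∀ᵐ ω ∂μ, |a ω| ≤ 0) : a = 0 := by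
  refine aeEq ?_
  filter_upwards [h, AEEqFun.coeFn_zero (β := ℝ) (μ := μ)] with ω h1 h2
  rw [h2]
  have := abs_nonneg (a ω)
  have h3 : |a ω| = 0 := le_antisymm h1 this
  simpa [abs_eq_zero] using h3

theorem eq_zero_of_abs_le_zero {a : Ω →ₘ[μ] ℝ} (h : |a| ≤ 0) : a = 0 := by
  refine eq_zero_of_abs_ae ?_
  filter_upwards [abs_le_ae h, AEEqFun.coeFn_zero (β := ℝ) (μ := μ)] with ω r1 r2
  rw [r2] at r1; exact r1

theorem abs_one_L0 : |(1 : Ω →ₘ[μ] ℝ)| = 1 := by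
  refine aeEq ?_
  filter_upwards [AEEqFun.coeFn_abs (1 : Ω →ₘ[μ] ℝ), AEEqFun.coeFn_one (β := ℝ) (μ := μ)]
    with ω h1 h2
  rw [h1, h2]
  simp

theorem nrm_glue (hnrm : IsRNNorm nrm) {A : Set Ω} (hA : MeasurableSet A) (u v : E) :
    nrm (ind μ A hA • u + ind μ Aᶜ hA.compl • v) =
      ind μ A hA * nrm u + ind μ Aᶜ hA.compl * nrm v := by
  set e := ind μ A hA
  set e' := ind μ Aᶜ hA.compl
  have hee : e * e = e := by
    rw [ind_mul, ind_congr (Set.inter_self A)]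
  have hee' : e * e' = 0 := by
    rw [ind_mul, ind_congr (Set.inter_compl_self A) _ MeasurableSet.empty, ind_empty]
  have he'e : e' * e = 0 := by
    rw [ind_mul, ind_congr (Set.compl_inter_self A) _ MeasurableSet.empty, ind_empty]
  have he'e' : e' * e' = e' := by
    rw [ind_mul, ind_congr (Set.inter_self Aᶜ)]
  have h1 : e • (e • u + e' • v) = e • u := by
    rw [smul_add, smul_smul, smul_smul, hee, hee', zero_smul, add_zero]
  have h2 : e' • (e • u + e' • v) = e' • v := by
    rw [smul_add, smul_smul, smul_smul, he'e, he'e', zero_smul, zero_add]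
  rw [nrm_partition hnrm hA (e • u + e' • v), h1, h2, nrm_ind_smul hnrm, nrm_ind_smul hnrm]

theorem extend_step [IsProbabilityMeasure μ] (hnrm : IsRNNorm nrm)
    (f : E →ₗ.[Ω →ₘ[μ] ℝ] (Ω →ₘ[μ] ℝ)) (hf : ∀ z : f.domain, |f z| ≤ nrm ↑z) (x : E) :
    ∃ g : E →ₗ.[Ω →ₘ[μ] ℝ] (Ω →ₘ[μ] ℝ), f ≤ g ∧ (∀ w : g.domain, |g w| ≤ nrm ↑w) ∧
      x ∈ g.domain := by
  classical
  set G : f.domain → Ω →ₘ[μ] ℝ := fun z => -f z - nrm (↑z + x) with hG_def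
  set S : Set (Ω →ₘ[μ] ℝ) := Set.range G with hS_def
  -- every `nrm (↑w + x) - f w` is an upper bound of `S`
  have hub : ∀ (z w : f.domain), G z ≤ nrm (↑w + x) - f w := by
    intro z w
    have h1 : ∀ᵐ ω ∂μ, |(f (w - z)) ω| ≤ (nrm (↑w - ↑z)) ω := by
      have := abs_le_ae (hf (w - z))
      have hc : ((w - z : f.domain) : E) = ↑w - ↑z := rfl
      rwa [hc] at this
    have h2 := nrm_tri_ae hnrm (↑w + x) (-(↑z + x))
    have hrw : (↑w + x) + -(↑z + x) = (↑w : E) - ↑z := by abel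
    rw [hrw, nrm_neg hnrm] at h2
    have h3 : f (w - z) = f w - f z := LinearPMap.map_sub f w z
    refine aeLe ?_
    filter_upwards [h1, h2, AEEqFun.coeFn_sub (-f z) (nrm (↑z + x)),
      AEEqFun.coeFn_neg (f z), AEEqFun.coeFn_sub (nrm (↑w + x)) (f w),
      (by rw [h3] : ⇑(f (w - z)) =ᵐ[μ] ⇑(f w - f z)),
      AEEqFun.coeFn_sub (f w) (f z)] with ω e1 e2 e3 e4 e5 e7 e8
    rw [e3, Pi.sub_apply, e4, Pi.neg_apply, e5, Pi.sub_apply]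
    rw [e7, e8, Pi.sub_apply] at e1
    have := (le_abs_self (f w ω - f z ω)).trans e1
    linarith
  have hSne : S.Nonempty := ⟨G 0, 0, rfl⟩
  have hβ : ∀ a ∈ S, a ≤ nrm (↑(0 : f.domain) + x) - f 0 := by
    rintro _ ⟨z, rfl⟩
    exact hub z 0
  -- S is upward directed
  have hdirS : ∀ a ∈ S, ∀ b ∈ S, ∃ c ∈ S, a ≤ c ∧ b ≤ c := by
    rintro _ ⟨z₁, rfl⟩ _ ⟨z₂, rfl⟩
    set d : Ω →ₘ[μ] ℝ := G z₁ - G z₂ with hd_def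
    have md : AEMeasurable (⇑d) μ := d.aestronglyMeasurable.aemeasurable
    set A : Set Ω := {ω | 0 ≤ md.mk (⇑d) ω} with hA_def
    have hA : MeasurableSet A := measurableSet_le measurable_const md.measurable_mk
    set e := ind μ A hA with he_def
    set e' := ind μ Aᶜ hA.compl with he'_def
    set z₃ : f.domain := e • z₁ + e' • z₂ with hz₃_def
    have hcoe : (↑z₃ : E) = e • ↑z₁ + e' • ↑z₂ := rfl
    have hfz₃ : f z₃ = e * f z₁ + e' * f z₂ := by
      rw [hz₃_def, LinearPMap.map_add, LinearPMap.map_smul, LinearPMap.map_smul,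
        smul_eq_mul, smul_eq_mul]
    have hx : e • x + e' • x = x := by
      rw [← add_smul, ind_add_compl, one_smul]
    have hsplit : (↑z₃ : E) + x = e • (↑z₁ + x) + e' • (↑z₂ + x) := by
      rw [smul_add, smul_add, hcoe]
      rw [show e • (↑z₁ : E) + e • x + (e' • ↑z₂ + e' • x) =
        (e • ↑z₁ + e' • ↑z₂) + (e • x + e' • x) from by abel, hx]
    have hnrm₃ : nrm (↑z₃ + x) = e * nrm (↑z₁ + x) + e' * nrm (↑z₂ + x) := by
      rw [hsplit]
      exact nrm_glue hnrm hA _ _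
    have hG₃ : G z₃ = e * G z₁ + e' * G z₂ := by
      rw [hG_def]
      simp only []
      rw [hfz₃, hnrm₃]
      ring
    refine ⟨G z₃, ⟨z₃, rfl⟩, ?_, ?_⟩ <;>
    · refine aeLe ?_
      have hcoe3 : ∀ᵐ ω ∂μ, (G z₃) ω = e ω * (G z₁) ω + e' ω * (G z₂) ω := by
        have h0 : ⇑(G z₃) =ᵐ[μ] ⇑(e * G z₁ + e' * G z₂) := by rw [hG₃]
        filter_upwards [h0, AEEqFun.coeFn_add (e * G z₁) (e' * G z₂),
          AEEqFun.coeFn_mul e (G z₁), AEEqFun.coeFn_mul e' (G z₂)] with ω p0 p1 p2 p3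
        rw [p0, p1, Pi.add_apply, p2, p3]; rfl
      have hdcoe : ∀ᵐ ω ∂μ, md.mk (⇑d) ω = (G z₁) ω - (G z₂) ω := by
        filter_upwards [md.ae_eq_mk, AEEqFun.coeFn_sub (G z₁) (G z₂)] with ω p1 p2
        rw [← p1, hd_def, p2]; rfl
      filter_upwards [hcoe3, hdcoe, ind_coeFn (μ := μ) hA, ind_coeFn (μ := μ) hA.compl]
        with ω p1 p2 p3 p4
      rw [p1, p3, p4]
      by_cases hω : ω ∈ A
      · have h0 : (0:ℝ) ≤ md.mk (⇑d) ω := hω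
        rw [p2] at h0
        rw [Set.indicator_of_mem hω, Set.indicator_of_notMem (by simpa using hω)]
        simp only [one_mul, zero_mul, add_zero]
        linarith [h0]
      · have h0 : ¬ (0:ℝ) ≤ md.mk (⇑d) ω := hω
        rw [p2] at h0
        rw [Set.indicator_of_notMem hω, Set.indicator_of_mem (by simpa using hω)]
        simp only [one_mul, zero_mul, zero_add]
        linarith [not_le.mp h0]
  obtain ⟨α, hα1, hα2⟩ := exists_aesup S hSne hdirS _ hβ
  -- the two-sided bound
  have hkey : ∀ z : f.domain, |f z + α| ≤ nrm (↑z + x) := by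
    intro z
    have hup : α ≤ nrm (↑z + x) - f z := hα2 _ (fun a ha => by
      obtain ⟨w, rfl⟩ := ha; exact hub w z)
    have hlo : -f z - nrm (↑z + x) ≤ α := hα1 _ ⟨z, rfl⟩
    refine ae_abs_le ?_
    filter_upwards [leAe hup, leAe hlo, AEEqFun.coeFn_add (f z) α,
      AEEqFun.coeFn_sub (nrm (↑z + x)) (f z), AEEqFun.coeFn_sub (-f z) (nrm (↑z + x)),
      AEEqFun.coeFn_neg (f z)] with ω p1 p2 p3 p4 p5 p6
    rw [p3, Pi.add_apply, abs_le]
    rw [p4, Pi.sub_apply] at p1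
    rw [p5, Pi.sub_apply, p6, Pi.neg_apply] at p2
    constructor <;> linarith
  -- the bound for general scalars, by localization
  have hstar : ∀ (ξ : Ω →ₘ[μ] ℝ) (z : f.domain), |f z + ξ * α| ≤ nrm (↑z + ξ • x) := by
    intro ξ z
    have mξ : AEMeasurable (⇑ξ) μ := ξ.aestronglyMeasurable.aemeasurable
    set gξ : Ω → ℝ := mξ.mk ⇑ξ with hgξ_def
    have hgm : Measurable gξ := mξ.measurable_mk
    set A : Set Ω := {ω | gξ ω ≠ 0} with hA_def
    have hA : MeasurableSet A := (hgm (measurableSet_singleton 0)).compl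
    set e := ind μ A hA with he_def
    set e' := ind μ Aᶜ hA.compl with he'_def
    set η : Ω →ₘ[μ] ℝ := ofMeas μ (fun ω => if gξ ω ≠ 0 then (gξ ω)⁻¹ else 0)
      (Measurable.ite hA hgm.inv measurable_const) with hη_def
    have hηcoe : ⇑η =ᵐ[μ] fun ω => if gξ ω ≠ 0 then (gξ ω)⁻¹ else 0 := ofMeas_coeFn _ _
    have hξg : ∀ᵐ ω ∂μ, ξ ω = gξ ω := mξ.ae_eq_mk
    -- identities
    have hξη : ξ * η = e := by
      refine aeEq ?_
      filter_upwards [AEEqFun.coeFn_mul ξ η, hηcoe, hξg, ind_coeFn (μ := μ) hA]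
        with ω p1 p2 p3 p4
      rw [p1, Pi.mul_apply, p2, p3, p4]
      by_cases hω : gξ ω ≠ 0
      · rw [if_pos hω, Set.indicator_of_mem (show ω ∈ A from hω), mul_inv_cancel₀ hω]
      · rw [if_neg hω, Set.indicator_of_notMem (show ω ∉ A from hω), mul_zero]
    have heξ2 : e * ξ = ξ := by
      refine aeEq ?_
      filter_upwards [AEEqFun.coeFn_mul e ξ, hξg, ind_coeFn (μ := μ) hA] with ω p1 p2 p3
      rw [p1, Pi.mul_apply, p3]
      by_cases hω : gξ ω ≠ 0
      · rw [Set.indicator_of_mem (show ω ∈ A from hω), one_mul]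
      · rw [Set.indicator_of_notMem (show ω ∉ A from hω), zero_mul, p2]
        push_neg at hω
        rw [hω]
    have he'ξ : e' * ξ = 0 := by
      refine aeEq ?_
      filter_upwards [AEEqFun.coeFn_mul e' ξ, hξg, ind_coeFn (μ := μ) hA.compl,
        AEEqFun.coeFn_zero (β := ℝ) (μ := μ)] with ω p1 p2 p3 p4
      rw [p1, Pi.mul_apply, p3, p4]
      by_cases hω : gξ ω ≠ 0
      · rw [Set.indicator_of_notMem (show ω ∉ Aᶜ from fun hc => hc hω), zero_mul]; rfl
      · push_neg at hω
        rw [p2, hω, mul_zero]; rfl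
    set w : f.domain := η • z with hw_def
    have hfw : f w = η * f z := by rw [hw_def, LinearPMap.map_smul, smul_eq_mul]
    have hkw := hkey w
    -- the two norm identities
    have hals : ξ • ((↑w : E) + x) = e • ↑z + ξ • x := by
      rw [show ((↑w : E)) = η • ↑z from rfl, smul_add, smul_smul, hξη]
    have hN1 : e * nrm (↑z + ξ • x) = |ξ| * nrm (↑w + x) := by
      have h1 : |ξ| * nrm (↑w + x) = nrm (e • ↑z + ξ • x) := by
        rw [← hnrm.2.1 ξ, hals]
      have h2 : e * nrm (↑z + ξ • x) = nrm (e • (↑z + ξ • x)) :=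
        (nrm_ind_smul hnrm hA _).symm
      have h3 : e • ((↑z : E) + ξ • x) = e • ↑z + ξ • x := by
        rw [smul_add, smul_smul, heξ2]
      rw [h2, h3, h1]
    have hN2 : e' * nrm (↑z + ξ • x) = e' * nrm ↑z := by
      have h3 : e' • ((↑z : E) + ξ • x) = e' • ↑z := by
        rw [smul_add, smul_smul, he'ξ, zero_smul, add_zero]
      rw [← nrm_ind_smul hnrm hA.compl, h3, nrm_ind_smul hnrm hA.compl]
    -- pointwise conclusion
    refine ae_abs_le ?_
    have q1 : ∀ᵐ ω ∂μ, |(f w) ω + α ω| ≤ (nrm (↑w + x)) ω := by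
      filter_upwards [abs_le_ae hkw, AEEqFun.coeFn_add (f w) α] with ω p1 p2
      rw [p2, Pi.add_apply] at p1; exact p1
    have q4 : ∀ᵐ ω ∂μ, (A.indicator (fun _ => (1:ℝ)) ω) * (nrm (↑z + ξ • x)) ω =
        |ξ ω| * (nrm (↑w + x)) ω := by
      have h0 : ⇑(e * nrm (↑z + ξ • x)) =ᵐ[μ] ⇑(|ξ| * nrm (↑w + x)) := by rw [hN1]
      filter_upwards [h0, AEEqFun.coeFn_mul e (nrm (↑z + ξ • x)),
        AEEqFun.coeFn_mul |ξ| (nrm (↑w + x)), AEEqFun.coeFn_abs ξ,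
        ind_coeFn (μ := μ) hA] with ω p0 p1 p2 p3 p4
      rw [← p4, ← p3]
      have := (p1.symm.trans p0).trans p2
      simpa using this
    have q5 : ∀ᵐ ω ∂μ, (Aᶜ.indicator (fun _ => (1:ℝ)) ω) * (nrm (↑z + ξ • x)) ω =
        (Aᶜ.indicator (fun _ => (1:ℝ)) ω) * (nrm ↑z) ω := by
      have h0 : ⇑(e' * nrm (↑z + ξ • x)) =ᵐ[μ] ⇑(e' * nrm ↑z) := by rw [hN2]
      filter_upwards [h0, AEEqFun.coeFn_mul e' (nrm (↑z + ξ • x)),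
        AEEqFun.coeFn_mul e' (nrm ↑z), ind_coeFn (μ := μ) hA.compl] with ω p0 p1 p2 p3
      rw [← p3]
      have := (p1.symm.trans p0).trans p2
      simpa using this
    have q6 : ∀ᵐ ω ∂μ, (f w) ω = η ω * (f z) ω := by
      have h0 : ⇑(f w) =ᵐ[μ] ⇑(η * f z) := by rw [hfw]
      filter_upwards [h0, AEEqFun.coeFn_mul η (f z)] with ω p0 p1
      rw [p0, p1]; rfl
    filter_upwards [q1, q4, q5, q6, hηcoe, hξg, abs_le_ae (hf z),
      AEEqFun.coeFn_add (f z) (ξ * α), AEEqFun.coeFn_mul ξ α] with ω p1 p4 p5 p6 p7 p8 p9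
      pa pm
    rw [pa, Pi.add_apply, pm, Pi.mul_apply]
    by_cases hω : gξ ω ≠ 0
    · -- on A
      have hind : A.indicator (fun _ => (1:ℝ)) ω = 1 :=
        Set.indicator_of_mem (show ω ∈ A from hω) _
      rw [hind, one_mul] at p4
      rw [p4]
      have hη1 : η ω = (gξ ω)⁻¹ := by rw [p7, if_pos hω]
      have hcalc : (f z) ω + ξ ω * α ω = ξ ω * ((f w) ω + α ω) := by
        rw [p6, hη1, p8, mul_add, ← mul_assoc, mul_inv_cancel₀ hω, one_mul]
      rw [hcalc, abs_mul]
      exact mul_le_mul_of_nonneg_left p1 (abs_nonneg _)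
    · -- off A
      push_neg at hω
      have hξ0 : ξ ω = 0 := by rw [p8, hω]
      have hind : Aᶜ.indicator (fun _ => (1:ℝ)) ω = 1 :=
        Set.indicator_of_mem (show ω ∈ Aᶜ from fun hc => hc hω) _
      rw [hind, one_mul, one_mul] at p5
      rw [hξ0, zero_mul, add_zero, p5]
      exact p9
  -- build the extension
  have H : ∀ c : Ω →ₘ[μ] ℝ, c • x = 0 → c • α = 0 := by
    intro c hc
    have h0 := hstar c 0
    rw [show ((↑(0 : f.domain) : E)) = 0 from rfl, zero_add, hc, nrm_zero hnrm,
      LinearPMap.map_zero, zero_add] at h0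
    rw [smul_eq_mul]
    exact eq_zero_of_abs_le_zero h0
  set fx := LinearPMap.mkSpanSingleton' (σ := RingHom.id _) x α H with hfx_def
  have hxmem : x ∈ fx.domain :=
    (Submodule.mem_span_singleton_self x : x ∈ Submodule.span (Ω →ₘ[μ] ℝ) {x})
  have hfxval : ∀ (u : E) (hu : u ∈ fx.domain) (c : Ω →ₘ[μ] ℝ), c • x = u →
      fx ⟨u, hu⟩ = c * α := by
    intro u hu c hcu
    subst hcu
    have h := LinearPMap.mkSpanSingleton'_apply x α H c hu
    rw [h]
    exact smul_eq_mul c α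
  have hcompat : ∀ (z : f.domain) (y : fx.domain), (↑z : E) = ↑y → f z = fx y := by
    intro z y hzy
    have hy : (↑y : E) ∈ Submodule.span (Ω →ₘ[μ] ℝ) {x} := y.2
    obtain ⟨c, hc⟩ := Submodule.mem_span_singleton.mp hy
    have happ : fx y = c * α := hfxval (↑y) y.2 c hc
    have h1 := hstar (-c) z
    have h2 : (↑z : E) + (-c) • x = 0 := by
      rw [neg_smul, hzy, ← hc, add_neg_cancel]
    rw [h2, nrm_zero hnrm] at h1
    have h3 : f z + (-c) * α = 0 := eq_zero_of_abs_le_zero h1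
    rw [happ]
    have : f z - c * α = 0 := by rw [← h3]; ring
    linear_combination this
  refine ⟨f.sup fx hcompat, f.left_le_sup fx hcompat, ?_, ?_⟩
  · intro w
    have hw : (↑w : E) ∈ f.domain ⊔ fx.domain := w.2
    obtain ⟨y, hy, u, hu, hyu⟩ := Submodule.mem_sup.mp hw
    have hu' : u ∈ Submodule.span (Ω →ₘ[μ] ℝ) {x} := hu
    obtain ⟨c, hc⟩ := Submodule.mem_span_singleton.mp hu'
    have happ : (f.sup fx hcompat) w = f ⟨y, hy⟩ + fx ⟨u, hu⟩ :=
      LinearPMap.sup_apply hcompat ⟨y, hy⟩ ⟨u, hu⟩ w hyu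
    rw [happ, hfxval u hu c hc]
    have hwc : (↑w : E) = y + c • x := by rw [← hyu, hc]
    rw [hwc]
    exact hstar c ⟨y, hy⟩
  · exact Submodule.mem_sup_right hxmem

end Aux8
section Aux9

variable {Ω : Type*} [MeasurableSpace Ω] {μ : Measure Ω}
variable {E : Type*} [AddCommGroup E] [Module (Ω →ₘ[μ] ℝ) E]
variable {nrm : E → Ω →ₘ[μ] ℝ}

theorem exists_dual [IsProbabilityMeasure μ] (hnrm : IsRNNorm nrm) {x₀ : E}
    (hx₀ : nrm x₀ = 1) :
    ∃ u₀ : E →ₗ[Ω →ₘ[μ] ℝ] (Ω →ₘ[μ] ℝ), u₀ x₀ = 1 ∧ ∀ x : E, |u₀ x| ≤ nrm x := by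
  classical
  have H₀ : ∀ c : Ω →ₘ[μ] ℝ, c • x₀ = 0 → c • (1 : Ω →ₘ[μ] ℝ) = 0 := by
    intro c hc
    have h1 : nrm (c • x₀) = |c| * nrm x₀ := hnrm.2.1 c x₀
    rw [hc, nrm_zero hnrm, hx₀, mul_one] at h1
    have hc0 : c = 0 := eq_zero_of_abs_le_zero (le_of_eq h1.symm)
    rw [hc0, zero_smul]
  set f₀ := LinearPMap.mkSpanSingleton' (σ := RingHom.id _) x₀ (1 : Ω →ₘ[μ] ℝ) H₀ with hf₀_def
  have hx₀mem : x₀ ∈ f₀.domain :=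
    (Submodule.mem_span_singleton_self x₀ : x₀ ∈ Submodule.span (Ω →ₘ[μ] ℝ) {x₀})
  have hf₀ : ∀ z : f₀.domain, |f₀ z| ≤ nrm ↑z := by
    intro z
    have hz : (↑z : E) ∈ Submodule.span (Ω →ₘ[μ] ℝ) {x₀} := z.2
    obtain ⟨c, hc⟩ := Submodule.mem_span_singleton.mp hz
    have hmem : c • x₀ ∈ f₀.domain := by rw [hc]; exact z.2
    have happ : f₀ z = c * 1 := by
      have h := LinearPMap.mkSpanSingleton'_apply x₀ (1 : Ω →ₘ[μ] ℝ) H₀ c hmem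
      have hz_eq : (⟨c • x₀, hmem⟩ : f₀.domain) = z := Subtype.ext hc
      rw [← hz_eq, h]
      exact smul_eq_mul c 1
    rw [happ, mul_one]
    have hnz : nrm ↑z = |c| := by
      rw [← hc, hnrm.2.1, hx₀, mul_one]
    rw [hnz]
  set P : Set (E →ₗ.[Ω →ₘ[μ] ℝ] (Ω →ₘ[μ] ℝ)) := {h | ∀ w : h.domain, |h w| ≤ nrm ↑w}
    with hP_def
  have ih : ∀ c ⊆ P, IsChain (· ≤ ·) c → ∀ y ∈ c, ∃ ub ∈ P, ∀ z ∈ c, z ≤ ub := by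
    intro c hcP hchain y hy
    have hdir : DirectedOn (· ≤ ·) c := hchain.directedOn
    refine ⟨LinearPMap.sSup c hdir, ?_, fun z hz => LinearPMap.le_sSup hdir hz⟩
    intro w
    have hw : (↑w : E) ∈ sSup (LinearPMap.domain '' c) := w.2
    have hne : (LinearPMap.domain '' c).Nonempty := ⟨y.domain, ⟨y, hy, rfl⟩⟩
    have hdir2 : DirectedOn (· ≤ ·) (LinearPMap.domain '' c) := by
      rintro _ ⟨p, hp, rfl⟩ _ ⟨q, hq, rfl⟩
      rcases hdir p hp q hq with ⟨r, hr, hpr, hqr⟩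
      exact ⟨r.domain, ⟨r, hr, rfl⟩, hpr.1, hqr.1⟩
    obtain ⟨_, ⟨p, hp, rfl⟩, hwp⟩ := (Submodule.mem_sSup_of_directed hne hdir2).mp hw
    have hple := LinearPMap.le_sSup hdir hp
    have heq : p ⟨↑w, hwp⟩ = (LinearPMap.sSup c hdir) w := hple.2 rfl
    rw [← heq]
    exact hcP hp ⟨↑w, hwp⟩
  obtain ⟨m, hf₀m, hmax⟩ := zorn_le_nonempty₀ P ih f₀ hf₀
  have hmP : m ∈ P := hmax.1
  have hdomain : m.domain = ⊤ := by
    rw [Submodule.eq_top_iff']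
    intro x
    obtain ⟨g, hmg, hgP, hxg⟩ := extend_step hnrm m hmP x
    exact (hmax.2 hgP hmg).1 hxg
  set u₀ : E →ₗ[Ω →ₘ[μ] ℝ] (Ω →ₘ[μ] ℝ) :=
    m.toFun.comp (LinearEquiv.ofTop m.domain hdomain).symm.toLinearMap with hu₀_def
  have happly : ∀ (x : E) (hx : x ∈ m.domain), u₀ x = m ⟨x, hx⟩ := by
    intro x hx
    show m.toFun ((LinearEquiv.ofTop m.domain hdomain).symm x) = m ⟨x, hx⟩
    rw [LinearEquiv.ofTop_symm_apply]
    rfl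
  have hx₀m : x₀ ∈ m.domain := hf₀m.1 hx₀mem
  refine ⟨u₀, ?_, ?_⟩
  · rw [happly x₀ hx₀m]
    have h1 : f₀ ⟨x₀, hx₀mem⟩ = m ⟨x₀, hx₀m⟩ := hf₀m.2 rfl
    rw [← h1]
    exact LinearPMap.mkSpanSingleton'_apply_self x₀ (1 : Ω →ₘ[μ] ℝ) H₀ _
  · intro x
    have hx : x ∈ m.domain := hdomain.symm ▸ Submodule.mem_top
    rw [happly x hx]
    exact hmP ⟨x, hx⟩

end Aux9
/-- In a nontrivial complete random normed module `E` with full support there exists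
`x₀ ∈ E` with `‖x₀‖ = 1`, and `u₀ ∈ E*` with `u₀(x₀) = 1` and `‖u₀‖ = 1`. -/
theorem exists_norm_one_and_dual_norm_one
    {Ω : Type*} [MeasurableSpace Ω] {μ : Measure Ω} [IsProbabilityMeasure μ]
    {E : Type*} [AddCommGroup E] [Module (Ω →ₘ[μ] ℝ) E]
    (nrm : E → Ω →ₘ[μ] ℝ) (hnrm : IsRNNorm nrm)
    (hcomplete : IsCompleteRN nrm) (hfull : HasFullSupport nrm) :
    ∃ x₀ : E, nrm x₀ = 1 ∧
      ∃ u₀ : E →ₗ[Ω →ₘ[μ] ℝ] (Ω →ₘ[μ] ℝ), u₀ x₀ = 1 ∧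
        (∀ x : E, |u₀ x| ≤ 1 * nrm x) ∧
        (∀ ξ : Ω →ₘ[μ] ℝ, 0 ≤ ξ → (∀ x : E, |u₀ x| ≤ ξ * nrm x) → 1 ≤ ξ) := by
  obtain ⟨x₀, hx₀⟩ := exists_nrm_one hnrm hcomplete hfull
  obtain ⟨u₀, hu1, hu2⟩ := exists_dual hnrm hx₀
  refine ⟨x₀, hx₀, u₀, hu1, fun x => by rw [one_mul]; exact hu2 x, ?_⟩
  intro ξ hξ h
  have hb := h x₀
  rw [hu1, hx₀, mul_one, abs_one_L0] at hb
  exact hb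

end RandomNormed
end

section
/- Let T: 𝒞(E) → 𝒞(E) be a fully order preserving operator on the class of proper lower semicontinuous L⁰-convex functions on a random normed module E. Then for any family {f_i}_{i∈I} ⊂ 𝒞(E) such that the pointwise supremum ⋁_{i∈I} f_i belongs to 𝒞(E), one has T(⋁_{i∈I} f_i) = ⋁_{i∈I} T(f_i). -/
open MeasureTheory Filter Topology ENNReal
open scoped Classical

namespace RandomNormed

variable {Ω : Type*} [MeasurableSpace Ω] {μ : Measure Ω}

private noncomputable def phi (x : EReal) : ℝ≥0∞ :=
  if x = ⊥ then 0 else if x = ⊤ then 4 else ENNReal.ofReal (Real.arctan x.toReal + 2)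

private theorem arctan_add_two_pos (r : ℝ) : 0 < Real.arctan r + 2 := by
  have h := Real.neg_pi_div_two_lt_arctan r
  have : Real.pi < 4 := by linarith [Real.pi_lt_d2]
  linarith

private theorem arctan_add_two_lt_four (r : ℝ) : Real.arctan r + 2 < 4 := by
  have h := Real.arctan_lt_pi_div_two r
  have : Real.pi < 4 := by linarith [Real.pi_lt_d2]
  linarith

private theorem phi_bot : phi ⊥ = 0 := by simp [phi]
private theorem phi_top : phi ⊤ = 4 := by simp [phi]
private theorem phi_coe (r : ℝ) : phi r = ENNReal.ofReal (Real.arctan r + 2) := by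
  simp [phi]

private theorem phi_strictMono : StrictMono phi := by
  intro a b hab
  induction a using EReal.rec with
  | bot =>
    rw [phi_bot]
    induction b using EReal.rec with
    | bot => exact absurd hab (lt_irrefl _)
    | coe q => rw [phi_coe]; exact ENNReal.ofReal_pos.mpr (arctan_add_two_pos q)
    | top => rw [phi_top]; norm_num
  | coe r =>
    induction b using EReal.rec with
    | bot => exact absurd hab (by simp)
    | coe q =>
      rw [phi_coe, phi_coe, ENNReal.ofReal_lt_ofReal_iff (arctan_add_two_pos q)]
      have : r < q := by exact_mod_cast hab
      simpa using Real.arctan_strictMono this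
    | top =>
      rw [phi_coe, phi_top]
      have h4 : (4 : ℝ≥0∞) = ENNReal.ofReal 4 := by norm_num
      rw [h4, ENNReal.ofReal_lt_ofReal_iff (by norm_num)]
      exact arctan_add_two_lt_four r
  | top => exact absurd hab (by simp)

private theorem phi_le_four (x : EReal) : phi x ≤ 4 := by
  induction x using EReal.rec with
  | bot => rw [phi_bot]; exact zero_le
  | coe r =>
    rw [phi_coe]
    calc ENNReal.ofReal (Real.arctan r + 2) ≤ ENNReal.ofReal 4 :=
          ENNReal.ofReal_le_ofReal (arctan_add_two_lt_four r).le
      _ ≤ 4 := by norm_num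
  | top => rw [phi_top]

private theorem phi_measurable : Measurable phi := phi_strictMono.monotone.measurable


private theorem exists_aeSup {α : Type*} [MeasurableSpace α] (μ : Measure α) [IsFiniteMeasure μ]
    {ι : Type*} (g : ι → α → EReal) (hg : ∀ i, AEMeasurable (g i) μ) :
    ∃ s : α → EReal, Measurable s ∧ (∀ i, ∀ᵐ ω ∂μ, g i ω ≤ s ω) ∧
      ∀ b : α → EReal, (∀ i, ∀ᵐ ω ∂μ, g i ω ≤ b ω) → ∀ᵐ ω ∂μ, s ω ≤ b ω := by
  classical
  set G : ι → α → EReal := fun i => (hg i).mk _ with hG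
  have hGmeas : ∀ i, Measurable (G i) := fun i => (hg i).measurable_mk
  have hGeq : ∀ i, g i =ᵐ[μ] G i := fun i => (hg i).ae_eq_mk
  -- sup over a countable subfamily
  set fam : Set ι → α → EReal := fun C ω => sSup ((fun i => G i ω) '' C) with hfam
  have fam_meas : ∀ C : Set ι, C.Countable → Measurable (fam C) := by
    intro C hC
    have := hC.to_subtype
    have : (fam C) = fun ω => ⨆ i : C, G i ω := by
      funext ω; rw [hfam]; simp [sSup_image']
    rw [this]
    exact Measurable.iSup (fun i => hGmeas i)
  have fam_mono : ∀ C C' : Set ι, C ⊆ C' → ∀ ω, fam C ω ≤ fam C' ω := by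
    intro C C' h ω
    exact sSup_le_sSup (Set.image_mono h)
  set I : Set ι → ℝ≥0∞ := fun C => ∫⁻ ω, phi (fam C ω) ∂μ with hI
  have I_le : ∀ C, I C ≤ 4 * μ Set.univ := by
    intro C
    calc I C ≤ ∫⁻ _, 4 ∂μ := lintegral_mono fun ω => phi_le_four _
      _ = 4 * μ Set.univ := lintegral_const _
  have I_ne_top : ∀ C, I C ≠ ⊤ := by
    intro C
    exact ((I_le C).trans_lt (by
      exact ENNReal.mul_lt_top (by norm_num) (measure_lt_top μ _))).ne
  set M : ℝ≥0∞ := ⨆ p : {C : Set ι // C.Countable}, I p.1 with hM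
  have M_ne_top : M ≠ ⊤ := by
    have h1 : M ≤ 4 * μ Set.univ := by
      rw [hM]; exact iSup_le fun p => I_le p.1
    exact (h1.trans_lt (ENNReal.mul_lt_top (by norm_num) (measure_lt_top μ _))).ne
  -- choose an approximating sequence
  have hseq : ∀ n : ℕ, ∃ p : {C : Set ι // C.Countable}, M ≤ I p.1 + ((n : ℝ≥0∞) + 1)⁻¹ := by
    intro n
    by_cases hM0 : M = 0
    · exact ⟨⟨∅, Set.countable_empty⟩, by simp [hM0]⟩
    · have hlt : M - ((n : ℝ≥0∞) + 1)⁻¹ < M :=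
        ENNReal.sub_lt_self M_ne_top hM0 (by simp)
      rw [hM, lt_iSup_iff] at hlt
      obtain ⟨p, hp⟩ := hlt
      exact ⟨p, tsub_le_iff_right.mp hp.le⟩
  choose Cseq hCseq using hseq
  set Cstar : Set ι := ⋃ n, (Cseq n).1 with hCstar
  have hCstar_count : Cstar.Countable := Set.countable_iUnion fun n => (Cseq n).2
  set s : α → EReal := fam Cstar with hs
  have hs_meas : Measurable s := fam_meas _ hCstar_count
  have hIs : ∀ n : ℕ, M ≤ I Cstar + ((n : ℝ≥0∞) + 1)⁻¹ := by
    intro n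
    refine (hCseq n).trans (add_le_add_left ?_ _)
    exact lintegral_mono fun ω => phi_strictMono.monotone
      (fam_mono _ _ (Set.subset_iUnion (fun k => (Cseq k).1) n) ω)
  have hIM : I Cstar = M := by
    refine le_antisymm (le_iSup (fun p : {C : Set ι // C.Countable} => I p.1)
      ⟨Cstar, hCstar_count⟩) ?_
    refine ENNReal.le_of_forall_pos_le_add fun ε hε _ => ?_
    obtain ⟨n, hn⟩ := ENNReal.exists_inv_nat_lt (by exact_mod_cast hε.ne' : (ε : ℝ≥0∞) ≠ 0)
    refine (hIs n).trans (add_le_add_right ?_ _)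
    refine le_trans ?_ hn.le
    exact ENNReal.inv_le_inv.mpr (by simp)
  refine ⟨s, hs_meas, ?_, ?_⟩
  · -- upper bound
    intro i
    have hGs : ∀ᵐ ω ∂μ, G i ω ≤ s ω := by
      by_contra hcon
      have hμA : μ {ω | ¬ G i ω ≤ s ω} ≠ 0 := fun h0 => hcon (MeasureTheory.ae_iff.mpr h0)
      have hlt : I Cstar < I (insert i Cstar) := by
        refine lintegral_strict_mono_of_ae_le_of_ae_lt_on
          (phi_measurable.comp (fam_meas _ (hCstar_count.insert i))).aemeasurable
          (I_ne_top Cstar) (Filter.Eventually.of_forall fun ω =>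
            phi_strictMono.monotone (fam_mono _ _ (Set.subset_insert i Cstar) ω))
          hμA ?_
        refine Filter.Eventually.of_forall fun ω hω => ?_
        have hsω : s ω < G i ω := not_le.mp hω
        have : fam (insert i Cstar) ω = G i ω ⊔ s ω := by
          show sSup ((fun j => G j ω) '' insert i Cstar) = _
          rw [Set.image_insert_eq, sSup_insert]
        refine phi_strictMono ?_
        rw [this, sup_eq_left.mpr hsω.le]
        exact hsω
      have : I (insert i Cstar) ≤ M :=
        le_iSup (fun p : {C : Set ι // C.Countable} => I p.1) ⟨insert i Cstar, hCstar_count.insert i⟩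
      exact absurd (hIM ▸ hlt) (not_lt.mpr (hIM ▸ this))
    filter_upwards [hGeq i, hGs] with ω h1 h2
    exact h1.le.trans h2
  · -- leastness
    intro b hb
    have hcount := hCstar_count
    have h1 : ∀ᵐ ω ∂μ, ∀ i ∈ Cstar, G i ω ≤ b ω := by
      rw [MeasureTheory.ae_ball_iff hcount]
      intro i _
      filter_upwards [hGeq i, hb i] with ω h1 h2
      exact h1.symm.le.trans h2
    refine h1.mono fun ω h => ?_
    rw [hs, hfam]
    refine sSup_le ?_
    rintro x ⟨i, hi, rfl⟩
    exact h i hi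

/-- A fully order preserving operator `T : 𝒞(E) → 𝒞(E)` commutes with (pointwise, i.e.
`L̄⁰`-valued) suprema of families whose supremum stays in `𝒞(E)`:
`T(⋁ᵢ fᵢ) = ⋁ᵢ T(fᵢ)`. -/
theorem fully_order_preserving_commutes_with_sup
    {Ω : Type*} [MeasurableSpace Ω] {μ : Measure Ω} [IsProbabilityMeasure μ]
    {E : Type*} [AddCommGroup E] [Module (Ω →ₘ[μ] ℝ) E]
    (nrm : E → Ω →ₘ[μ] ℝ) (hnrm : IsRNNorm nrm)
    (T : CvxFn nrm → CvxFn nrm) (hT : IsFullyOrderPreserving nrm T)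
    {ι : Type*} (f : ι → CvxFn nrm) (F : CvxFn nrm)
    (hsup : ∀ x : E, IsAESup μ {g : Ω → EReal | ∃ i : ι, g = (f i).1 x} (F.1 x)) :
    ∀ x : E, IsAESup μ {g : Ω → EReal | ∃ i : ι, g = (T (f i)).1 x} ((T F).1 x) := by
  classical
  rcases isEmpty_or_nonempty ι with hι | hι
  · exfalso
    have h2 := (hsup 0).2 (fun _ => ⊥) measurable_const.aemeasurable
      (by rintro g ⟨i, -⟩; exact hι.elim i)
    obtain ⟨ω, hω1, hω2⟩ := (h2.and (F.2.2.1 0)).exists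
    exact absurd (hω1.trans_lt hω2) (by simp)
  · obtain ⟨i₀⟩ := hι
    choose s hs_meas hs_ub hs_least using fun x : E =>
      exists_aeSup μ (fun i : ι => (T (f i)).1 x) (fun i => (T (f i)).2.1 x)
    have hfF : ∀ i, CleFn μ (f i).1 F.1 := fun i x => (hsup x).1 _ ⟨i, rfl⟩
    have hTfF : ∀ i, CleFn μ (T (f i)).1 (T F).1 := fun i => (hT.1 _ _).mp (hfF i)
    have hS : IsCvxFn nrm s := by
      refine ⟨fun x => (hs_meas x).aemeasurable, ?_, ?_, ?_, ?_⟩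
      · intro x
        filter_upwards [hs_ub x i₀, (T (f i₀)).2.2.1 x] with ω h1 h2
        exact h2.trans_le h1
      · obtain ⟨x₀, hx₀⟩ := (T F).2.2.2.1
        refine ⟨x₀, ?_⟩
        have hle : ∀ᵐ ω ∂μ, s x₀ ω ≤ (T F).1 x₀ ω :=
          hs_least x₀ _ (fun i => hTfF i x₀)
        filter_upwards [hle, hx₀] with ω h1 h2
        exact h1.trans_lt h2
      · intro ξ hξ0 hξ1 x y
        have hξω : ∀ᵐ ω ∂μ, (0:ℝ) ≤ ξ ω := by
          filter_upwards [AEEqFun.coeFn_le.mpr hξ0, AEEqFun.coeFn_zero (β := ℝ) (μ := μ)]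
            with ω h1 h2
          rw [h2] at h1; exact h1
        have h1ξω : ∀ᵐ ω ∂μ, (0:ℝ) ≤ (1 - ξ : Ω →ₘ[μ] ℝ) ω := by
          filter_upwards [AEEqFun.coeFn_le.mpr hξ1, AEEqFun.coeFn_one (β := ℝ) (μ := μ),
            AEEqFun.coeFn_sub (1 : Ω →ₘ[μ] ℝ) ξ] with ω h1 h2 h3
          rw [h3]; simp only [Pi.sub_apply, h2]
          rw [h2] at h1; simp only [Pi.one_apply] at h1 ⊢
          linarith
        refine hs_least _ _ (fun i => ?_)
        filter_upwards [(T (f i)).2.2.2.2.1 ξ hξ0 hξ1 x y, hs_ub x i, hs_ub y i, hξω, h1ξω]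
          with ω hc hx hy h0 h1
        refine hc.trans (add_le_add ?_ ?_)
        · exact mul_le_mul_of_nonneg_left hx (by exact_mod_cast h0)
        · exact mul_le_mul_of_nonneg_left hy (by exact_mod_cast h1)
      · intro x r x₀ r₀ hxr hx hr
        refine hs_least _ _ (fun i => ?_)
        refine (T (f i)).2.2.2.2.2 x r x₀ r₀ (fun n => ?_) hx hr
        filter_upwards [hxr n, hs_ub (x n) i] with ω h1 h2
        exact h2.trans h1
    obtain ⟨G, hG⟩ := hT.2 ⟨s, hS⟩
    have h1 : ∀ i, CleFn μ (T (f i)).1 (T G).1 := by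
      intro i x
      filter_upwards [hs_ub x i, hG x] with ω ha hb
      exact ha.trans hb.ge
    have h2 : ∀ i, CleFn μ (f i).1 G.1 := fun i => (hT.1 _ _).mpr (h1 i)
    have h3 : CleFn μ F.1 G.1 := fun x =>
      (hsup x).2 (G.1 x) (G.2.1 x) (by rintro g ⟨i, rfl⟩; exact h2 i x)
    have h4 : CleFn μ (T F).1 (T G).1 := (hT.1 _ _).mp h3
    have h5 : ∀ x, ∀ᵐ ω ∂μ, (T F).1 x ω ≤ s x ω := by
      intro x
      filter_upwards [h4 x, hG x] with ω ha hb
      exact ha.trans hb.le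
    intro x
    constructor
    · rintro g ⟨i, rfl⟩
      exact hTfF i x
    · intro b _ hb
      have hsb : ∀ᵐ ω ∂μ, s x ω ≤ b ω := hs_least x b (fun i => hb _ ⟨i, rfl⟩)
      filter_upwards [h5 x, hsb] with ω ha hb'
      exact ha.trans hb'


end RandomNormed
end
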